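/- arXiv:1601.07809 — 11 statements merged into one kernel-verified Lean document; each statement's English description precedes it below -/
import Mathlib

section
/- Let r be a positive integer and let A, B, C be nonempty subsets of {1, ..., r} such that every triple (a, b, c) with a ∈ A, b ∈ B, c ∈ C satisfies all three triangle inequalities (a + b ≥ c, a + c ≥ b, b + c ≥ a). If r is even then |A| + |B| + |C| ≤ 3⌈(r+1)/2⌉, and if r is odd then |A| + |B| + |C| ≤ 3⌈(r+1)/2⌉ + 1. -/
/-- `m r = ⌈(r+1)/2⌉`, the midpoint count. -/
def mval (r : ℕ) : ℕ := (r + 2) / 2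

theorem metric_triple_card_bound (r : ℕ) (hr : 0 < r) (A B C : Finset ℕ)
    (hA : A.Nonempty) (hB : B.Nonempty) (hC : C.Nonempty)
    (hAr : A ⊆ Finset.Icc 1 r) (hBr : B ⊆ Finset.Icc 1 r) (hCr : C ⊆ Finset.Icc 1 r)
    (hmetric : ∀ a ∈ A, ∀ b ∈ B, ∀ c ∈ C, a + b ≥ c ∧ a + c ≥ b ∧ b + c ≥ a) :
    (Even r → A.card + B.card + C.card ≤ 3 * mval r) ∧
    (Odd r → A.card + B.card + C.card ≤ 3 * mval r + 1) := by
  have cardLe : ∀ (S : Finset ℕ) (hS : S.Nonempty),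
      S.card ≤ S.max' hS - S.min' hS + 1 := by
    intro S hS
    have hsub : S ⊆ Finset.Icc (S.min' hS) (S.max' hS) := by
      intro x hx
      exact Finset.mem_Icc.mpr ⟨S.min'_le x hx, S.le_max' x hx⟩
    calc S.card ≤ (Finset.Icc (S.min' hS) (S.max' hS)).card :=
          Finset.card_le_card hsub
      _ = S.max' hS - S.min' hS + 1 := by rw [Nat.card_Icc]; have := S.min'_le _ (S.max'_mem hS); omega
  set am := A.min' hA
  set aM := A.max' hA
  set bm := B.min' hB
  set bM := B.max' hB
  set cm := C.min' hC
  set cM := C.max' hC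
  have h1 := cardLe A hA
  have h2 := cardLe B hB
  have h3 := cardLe C hC
  have hamA : am ∈ A := A.min'_mem hA
  have haMA : aM ∈ A := A.max'_mem hA
  have hbmB : bm ∈ B := B.min'_mem hB
  have hbMB : bM ∈ B := B.max'_mem hB
  have hcmC : cm ∈ C := C.min'_mem hC
  have hcMC : cM ∈ C := C.max'_mem hC
  have k1 : aM ≤ bm + cm := (hmetric aM haMA bm hbmB cm hcmC).2.2
  have k2 : bM ≤ am + cm := (hmetric am hamA bM hbMB cm hcmC).2.1
  have k3 : cM ≤ am + bm := (hmetric am hamA bm hbmB cM hcMC).1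
  have r1 := Finset.mem_Icc.mp (hAr hamA)
  have r2 := Finset.mem_Icc.mp (hAr haMA)
  have r3 := Finset.mem_Icc.mp (hBr hbmB)
  have r4 := Finset.mem_Icc.mp (hBr hbMB)
  have r5 := Finset.mem_Icc.mp (hCr hcmC)
  have r6 := Finset.mem_Icc.mp (hCr hcMC)
  have hma : am ≤ aM := A.min'_le aM haMA
  have hmb : bm ≤ bM := B.min'_le bM hbMB
  have hmc : cm ≤ cM := C.min'_le cM hcMC
  unfold mval
  constructor
  · intro he
    rw [Nat.even_iff] at he
    omega
  · intro ho
    rw [Nat.odd_iff] at ho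
    omega
end

section
/- For any finite simple graph G on n vertices, the proper square G² of G satisfies e(G²) ≥ e(G) − ⌊n/2⌋, where e denotes the number of edges. -/
/-- `G` is `C₄`-free: no two distinct vertices have two or more common neighbors. -/
def C4Free {V : Type*} (G : SimpleGraph V) : Prop :=
  ∀ x y z w : V, x ≠ y → G.Adj x z → G.Adj y z → G.Adj x w → G.Adj y w → z = w

/-- The proper square of `G`: `x ~ y` iff `x ≠ y` and they have a common neighbor. -/
def properSquare {V : Type*} (G : SimpleGraph V) : SimpleGraph V where
  Adj x y := x ≠ y ∧ ∃ z, G.Adj x z ∧ G.Adj z y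
  symm := by
    constructor
    rintro x y ⟨hxy, z, h1, h2⟩
    exact ⟨hxy.symm, z, h2.symm, h1.symm⟩
  loopless := by constructor; rintro x ⟨h, -⟩; exact h rfl

/-- The degree of vertex `v` in `G`. -/
noncomputable def deg {V : Type*} (G : SimpleGraph V) (v : V) : ℕ :=
  Nat.card {w : V | G.Adj v w}

private lemma ncard_incidenceSet_eq {V : Type*} [Fintype V] (G : SimpleGraph V) (v : V) :
    (G.incidenceSet v).ncard = (G.neighborSet v).ncard := by
  classical
  rw [← Nat.card_coe_set_eq, ← Nat.card_coe_set_eq]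
  exact Nat.card_congr (G.incidenceSetEquivNeighborSet v)

private lemma deg_le_sq_deg_add_one {V : Type*} [Fintype V] {G : SimpleGraph V} {v w : V}
    (hvw : G.Adj v w) :
    (G.neighborSet w).ncard ≤ ((properSquare G).neighborSet v).ncard + 1 := by
  have hsub : G.neighborSet w ⊆ insert v ((properSquare G).neighborSet v) := by
    intro z hz
    rcases eq_or_ne z v with rfl | hzv
    · exact Set.mem_insert _ _
    · exact Set.mem_insert_of_mem _ ⟨hzv.symm, w, hvw, hz⟩
  exact (Set.ncard_le_ncard hsub).trans (Set.ncard_insert_le _ _)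

private lemma deg_le_sq_deg {V : Type*} [Fintype V] {G : SimpleGraph V} {v w : V}
    (hvw : G.Adj v w) (h2 : (properSquare G).Adj v w) :
    (G.neighborSet w).ncard ≤ ((properSquare G).neighborSet v).ncard := by
  have hsub : insert w (G.neighborSet w \ {v}) ⊆ (properSquare G).neighborSet v := by
    intro z hz
    rcases Set.mem_insert_iff.mp hz with rfl | ⟨hadj, hzv⟩
    · exact h2
    · exact ⟨fun h => hzv (by simp [← h]), w, hvw, hadj⟩
  have h1 : (G.neighborSet w \ {v}).ncard + 1 = (G.neighborSet w).ncard :=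
    Set.ncard_diff_singleton_add_one (by exact hvw.symm) (Set.toFinite _)
  have h3 : (insert w (G.neighborSet w \ {v})).ncard = (G.neighborSet w \ {v}).ncard + 1 :=
    Set.ncard_insert_of_notMem (fun h => G.loopless.irrefl w h.1) (Set.toFinite _)
  calc (G.neighborSet w).ncard = (insert w (G.neighborSet w \ {v})).ncard := by omega
    _ ≤ ((properSquare G).neighborSet v).ncard := Set.ncard_le_ncard hsub

private lemma key : ∀ (n : ℕ) (V : Type) [Fintype V] (G : SimpleGraph V), Nat.card V = n →
    Nat.card G.edgeSet ≤ Nat.card (properSquare G).edgeSet + n / 2 := by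
  intro n
  induction n using Nat.strong_induction_on with
  | _ n IH =>
    intro V _ G hcard
    classical
    by_cases hexists : ∃ v w, G.Adj v w
    swap
    · have hE : G.edgeSet = ∅ := by
        ext e
        refine ⟨fun he => ?_, fun h => h.elim⟩
        induction e using Sym2.ind with
        | _ a b => exact absurd ⟨a, b, he⟩ hexists
      simp [hE]
    obtain ⟨v, w, hvw⟩ := hexists
    have hn2 : 2 ≤ n := by
      have : Nontrivial V := ⟨⟨v, w, hvw.ne⟩⟩
      rw [← hcard, Nat.card_eq_fintype_card]
      exact Fintype.one_lt_card
    set S : Set V := ({v, w} : Set V)ᶜ with hS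
    have hScard : Nat.card ↥S = n - 2 := by
      rw [Nat.card_coe_set_eq, hS, Set.compl_eq_univ_diff,
        Set.ncard_diff (Set.subset_univ _), Set.ncard_univ, Set.ncard_pair hvw.ne, hcard]
    have hIH := IH (n - 2) (by omega) ↥S (G.induce S) hScard
    -- G side
    have hinj : Function.Injective (Sym2.map (Subtype.val : S → V)) :=
      Sym2.map.injective Subtype.val_injective
    set U : Set (Sym2 V) := G.incidenceSet v ∪ G.incidenceSet w with hU
    have hEsplit : G.edgeSet.ncard ≤ (G.edgeSet \ U).ncard + U.ncard := by
      refine le_trans (Set.ncard_le_ncard ?_ (Set.toFinite _)) (Set.ncard_union_le _ _)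
      rw [Set.diff_union_self]
      exact Set.subset_union_left
    have hUcard : U.ncard + 1 = (G.neighborSet v).ncard + (G.neighborSet w).ncard := by
      have := Set.ncard_union_add_ncard_inter (G.incidenceSet v) (G.incidenceSet w)
        (Set.toFinite _) (Set.toFinite _)
      rw [G.incidenceSet_inter_incidenceSet_of_adj hvw, Set.ncard_singleton] at this
      rw [← ncard_incidenceSet_eq, ← ncard_incidenceSet_eq, ← this, hU]
    have hW : (G.edgeSet \ U).ncard ≤ Nat.card (G.induce S).edgeSet := by
      have hsub : G.edgeSet \ U ⊆ Sym2.map Subtype.val '' ((G.induce S).edgeSet) := by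
        rintro e ⟨he, hnot⟩
        revert he hnot
        induction e using Sym2.ind with
        | _ a b =>
          intro he hnot
          have hab : G.Adj a b := he
          have haS : a ∈ S := by
            intro hmem
            rcases hmem with rfl | rfl
            · exact hnot (Or.inl ⟨he, by simp⟩)
            · exact hnot (Or.inr ⟨he, by simp⟩)
          have hbS : b ∈ S := by
            intro hmem
            rcases hmem with rfl | rfl
            · exact hnot (Or.inl ⟨he, by simp⟩)
            · exact hnot (Or.inr ⟨he, by simp⟩)
          exact ⟨s(⟨a, haS⟩, ⟨b, hbS⟩), hab, by simp⟩
      calc (G.edgeSet \ U).ncard ≤ (Sym2.map Subtype.val '' ((G.induce S).edgeSet)).ncard :=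
            Set.ncard_le_ncard hsub (Set.toFinite _)
        _ = ((G.induce S).edgeSet : Set (Sym2 ↥S)).ncard := Set.ncard_image_of_injective _ hinj
        _ = Nat.card (G.induce S).edgeSet := (Nat.card_coe_set_eq _).symm
    -- square side
    have hQ2 : Nat.card (properSquare (G.induce S)).edgeSet + ((properSquare G).incidenceSet v ∪ (properSquare G).incidenceSet w).ncard ≤ Nat.card (properSquare G).edgeSet := by
      set T2 : Set (Sym2 V) :=
        Sym2.map (Subtype.val : S → V) '' (properSquare (G.induce S)).edgeSet with hT2
      have hT2card : T2.ncard = Nat.card (properSquare (G.induce S)).edgeSet := by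
        rw [hT2, Set.ncard_image_of_injective _ hinj, Nat.card_coe_set_eq]
      have hT2sub : T2 ⊆ (properSquare G).edgeSet := by
        rintro e ⟨e', he', hmap⟩
        revert he' hmap
        induction e' using Sym2.ind with
        | _ a b =>
          rintro he' rfl
          obtain ⟨hne, z, h1, h2⟩ := he'
          exact ⟨fun h => hne (Subtype.ext h), z.val, h1, h2⟩
      have hdisj : Disjoint T2 ((properSquare G).incidenceSet v ∪ (properSquare G).incidenceSet w) := by
        rw [Set.disjoint_left]
        rintro e ⟨e', he', rfl⟩ hmem
        rcases hmem with hm | hm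
        · obtain ⟨a, -, ha⟩ := Sym2.mem_map.mp hm.2
          exact a.prop (by rw [ha]; exact Set.mem_insert _ _)
        · obtain ⟨a, -, ha⟩ := Sym2.mem_map.mp hm.2
          exact a.prop (by rw [ha]; exact Set.mem_insert_of_mem _ rfl)
      have hsub2 : T2 ∪ ((properSquare G).incidenceSet v ∪ (properSquare G).incidenceSet w) ⊆ (properSquare G).edgeSet := by
        refine Set.union_subset hT2sub (Set.union_subset ?_ ?_) <;> exact (properSquare G).incidenceSet_subset _
      calc Nat.card (properSquare (G.induce S)).edgeSet + ((properSquare G).incidenceSet v ∪ (properSquare G).incidenceSet w).ncard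
          = (T2 ∪ ((properSquare G).incidenceSet v ∪ (properSquare G).incidenceSet w)).ncard := by
            rw [Set.ncard_union_eq hdisj (Set.toFinite _) (Set.toFinite _), hT2card]
        _ ≤ (properSquare G).edgeSet.ncard := Set.ncard_le_ncard hsub2 (Set.toFinite _)
        _ = Nat.card (properSquare G).edgeSet := (Nat.card_coe_set_eq _).symm
    -- lower bound on ((properSquare G).incidenceSet v ∪ (properSquare G).incidenceSet w).ncard
    have hU2card : (G.neighborSet v).ncard + (G.neighborSet w).ncard ≤ ((properSquare G).incidenceSet v ∪ (properSquare G).incidenceSet w).ncard + 2 ∧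
        ((properSquare G).Adj v w → (G.neighborSet v).ncard + (G.neighborSet w).ncard ≤ ((properSquare G).incidenceSet v ∪ (properSquare G).incidenceSet w).ncard + 1) := by
      have hsum := Set.ncard_union_add_ncard_inter ((properSquare G).incidenceSet v) ((properSquare G).incidenceSet w)
        (Set.toFinite _) (Set.toFinite _)
      rw [ncard_incidenceSet_eq, ncard_incidenceSet_eq] at hsum
      by_cases hadj2 : (properSquare G).Adj v w
      · rw [(properSquare G).incidenceSet_inter_incidenceSet_of_adj hadj2, Set.ncard_singleton] at hsum
        have b1 := deg_le_sq_deg hvw hadj2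
        have b2 := deg_le_sq_deg hvw.symm hadj2.symm
        exact ⟨by omega, fun _ => by omega⟩
      · rw [(properSquare G).incidenceSet_inter_incidenceSet_of_not_adj hadj2 hvw.ne, Set.ncard_empty] at hsum
        have b1 := deg_le_sq_deg_add_one hvw
        have b2 := deg_le_sq_deg_add_one hvw.symm
        have hQvw : ¬ (properSquare G).Adj v w := hadj2
        refine ⟨by omega, fun h => absurd h hQvw⟩
    obtain ⟨hU2a, hU2b⟩ := hU2card
    have hdiv : n / 2 = (n - 2) / 2 + 1 := by omega
    rw [Nat.card_coe_set_eq]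
    by_cases hadj2 : (properSquare G).Adj v w
    · have := hU2b hadj2
      omega
    · have hU2capcard : ((properSquare G).incidenceSet v ∪ (properSquare G).incidenceSet w).ncard + 2 ≥ (G.neighborSet v).ncard + (G.neighborSet w).ncard := hU2a
      omega

theorem furedi_proper_square (n : ℕ) (G : SimpleGraph (Fin n)) :
    Nat.card G.edgeSet ≤ Nat.card (properSquare G).edgeSet + n / 2 := by
  exact key n (Fin n) G (by simp)
end

section
/- If G is a C₄-free simple graph on n vertices, then the number of edges of G satisfies e(G) ≤ (1/2)·n^{3/2} + n. -/
theorem c4free_edge_bound (n : ℕ) (G : SimpleGraph (Fin n)) (h : C4Free G) :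
    (Nat.card G.edgeSet : ℝ) ≤ (n : ℝ) ^ ((3 : ℝ) / 2) / 2 + n := by
  classical
  haveI : DecidableRel G.Adj := Classical.decRel _
  set e : ℕ := G.edgeFinset.card with he
  have hcard : Nat.card G.edgeSet = e := by
    rw [Nat.card_eq_fintype_card, ← SimpleGraph.edgeFinset_card]
  -- key combinatorial count
  set S : Fin n → Finset (Fin n × Fin n) := fun z =>
    (G.neighborFinset z ×ˢ G.neighborFinset z).filter fun q => q.1 ≠ q.2 with hS
  have hdisj : ∀ z ∈ (Finset.univ : Finset (Fin n)), ∀ w ∈ Finset.univ,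
      z ≠ w → Disjoint (S z) (S w) := by
    intro z _ w _ hzw
    rw [Finset.disjoint_left]
    rintro ⟨x, y⟩ hx hw
    simp only [hS, Finset.mem_filter, Finset.mem_product,
      SimpleGraph.mem_neighborFinset] at hx hw
    exact hzw (h x y z w hx.2 hx.1.1.symm hx.1.2.symm hw.1.1.symm hw.1.2.symm)
  have hsumS : ∑ z, (S z).card ≤ n * n := by
    rw [← Finset.card_biUnion hdisj]
    calc (Finset.univ.biUnion S).card ≤ Fintype.card (Fin n × Fin n) :=
          Finset.card_le_univ _
      _ = n * n := by simp
  have hSz : ∀ z, (S z).card + G.degree z = G.degree z * G.degree z := by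
    intro z
    have hdiag : ((G.neighborFinset z ×ˢ G.neighborFinset z).filter
        fun q => ¬ q.1 ≠ q.2).card = G.degree z := by
      rw [← SimpleGraph.card_neighborFinset_eq_degree]
      apply Finset.card_nbij (fun q => q.1)
      · rintro ⟨x, y⟩ hq
        simp only [Finset.mem_coe, Finset.mem_filter, Finset.mem_product, not_not] at hq
        simpa using hq.1.1
      · rintro ⟨x, y⟩ hx ⟨x', y'⟩ hy hxy
        simp only [Finset.coe_filter, Set.mem_setOf_eq, Finset.mem_product,
          not_not] at hx hy
        simp only at hxy
        subst hxy
        simp [← hx.2, ← hy.2]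
      · intro x hx
        simp only [Finset.mem_coe, SimpleGraph.mem_neighborFinset] at hx
        refine ⟨(x, x), ?_, rfl⟩
        simp [Finset.mem_coe, SimpleGraph.mem_neighborFinset, hx]
    have := Finset.card_filter_add_card_filter_not
      (s := G.neighborFinset z ×ˢ G.neighborFinset z) (p := fun q => q.1 ≠ q.2)
    rw [hdiag] at this
    rw [this, Finset.card_product, SimpleGraph.card_neighborFinset_eq_degree]
  have hsum_sq : ∑ z, G.degree z * G.degree z ≤ n * n + 2 * e := by
    have : ∑ z, ((S z).card + G.degree z) = ∑ z, G.degree z * G.degree z := by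
      exact Finset.sum_congr rfl fun z _ => hSz z
    rw [← this, Finset.sum_add_distrib, G.sum_degrees_eq_twice_card_edges]
    exact Nat.add_le_add_right hsumS _
  have hdegsum : ∑ z, G.degree z = 2 * e := G.sum_degrees_eq_twice_card_edges
  -- Cauchy-Schwarz over ℝ
  have hcs : ((2 * e : ℕ) : ℝ) ^ 2 ≤ n * (n * n + 2 * e) := by
    have h1 : ((∑ z, G.degree z : ℕ) : ℝ) ^ 2
        ≤ (((Finset.univ : Finset (Fin n)).card : ℕ) : ℝ) * ∑ z : Fin n, (G.degree z : ℝ) ^ 2 := by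
      push_cast
      exact sq_sum_le_card_mul_sum_sq
    rw [← hdegsum]
    calc ((∑ z, G.degree z : ℕ) : ℝ) ^ 2
        ≤ (((Finset.univ : Finset (Fin n)).card : ℕ) : ℝ) * ∑ z : Fin n, (G.degree z : ℝ) ^ 2 := h1
      _ ≤ (n : ℝ) * (n * n + 2 * e) := by
          rw [Finset.card_univ, Fintype.card_fin]
          apply mul_le_mul_of_nonneg_left _ (by positivity)
          have := hsum_sq
          calc (∑ z : Fin n, (G.degree z : ℝ) ^ 2)
              = ((∑ z, G.degree z * G.degree z : ℕ) : ℝ) := by push_cast; simp [sq]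
            _ ≤ ((n * n + 2 * e : ℕ) : ℝ) := by exact_mod_cast this
            _ = (n : ℝ) * n + 2 * e := by push_cast; ring
  -- final real arithmetic
  rw [hcard]
  set x : ℝ := (e : ℝ) with hx
  have hx0 : 0 ≤ x := by positivity
  have hkey : 4 * x ^ 2 ≤ (n : ℝ) ^ 3 + 2 * n * x := by
    push_cast at hcs
    nlinarith [hcs]
  set s : ℝ := Real.sqrt n with hs
  have hs0 : 0 ≤ s := Real.sqrt_nonneg _
  have hs2 : s ^ 2 = n := Real.sq_sqrt (by positivity)
  have hrpow : (n : ℝ) ^ ((3 : ℝ) / 2) = s ^ 3 := by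
    rw [hs, Real.sqrt_eq_rpow, ← Real.rpow_natCast ((n : ℝ) ^ ((1:ℝ)/2)) 3,
      ← Real.rpow_mul (by positivity)]
    norm_num
  rw [hrpow]
  by_contra hcon
  push_neg at hcon
  have hkey' : 4 * x ^ 2 ≤ s ^ 2 * s ^ 2 * s ^ 2 + 2 * (s ^ 2) * x := by
    rw [hs2]; nlinarith [hkey]
  have hx1 : 0 < x := lt_of_le_of_lt (by positivity) hcon
  have h2 : 0 < 2 * x + s ^ 3 := by positivity
  have h3 : 0 < 2 * x - s ^ 3 - 2 * s ^ 2 := by linarith [hcon, hs2.le, hs2.ge]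
  have hprod := mul_pos h3 h2
  nlinarith [hkey', hprod, mul_nonneg (mul_nonneg hs0 hs0) hx0, pow_nonneg hs0 5]
end

section
/- If G is a C₄-free simple graph on n vertices with degree sequence d₁, ..., dₙ, then the sum of the squares of the degrees satisfies Σ dᵢ² ≤ n² + 2·n^{3/2}. -/
open Finset in
theorem c4free_degree_square_sum (n : ℕ) (G : SimpleGraph (Fin n)) (h : C4Free G) :
    ∑ v : Fin n, (deg G v : ℝ) ^ 2 ≤ (n : ℝ) ^ 2 + 2 * (n : ℝ) ^ ((3 : ℝ) / 2) := by
  classical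
  set d : Fin n → ℕ := fun v => (univ.filter (fun w => G.Adj v w)).card with hd
  have hdeg : ∀ v, deg G v = d v := by
    intro v
    rw [deg, Nat.card_eq_fintype_card]
    simp [hd, ← Fintype.card_subtype]
  have key : ∑ v : Fin n, ((univ.filter (fun w => G.Adj v w)).offDiag).card
      ≤ ((univ : Finset (Fin n)).offDiag).card := by
    rw [← Finset.card_sigma]
    apply Finset.card_le_card_of_injOn (fun p => p.2)
    · intro p hp
      rw [Finset.mem_coe, Finset.mem_sigma] at hp
      have h2 := Finset.mem_offDiag.mp hp.2
      exact Finset.mem_offDiag.mpr ⟨mem_univ _, mem_univ _, h2.2.2⟩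
    · intro p hp q hq hpq
      simp only [Finset.mem_coe, Finset.mem_sigma] at hp hq
      obtain ⟨hx, hy, hne⟩ := Finset.mem_offDiag.mp hp.2
      obtain ⟨hx', hy', -⟩ := Finset.mem_offDiag.mp hq.2
      rw [Finset.mem_filter] at hx hy hx' hy'
      have h2 : p.2 = q.2 := hpq
      have h1 : p.1 = q.1 := by
        rw [h2] at hx hy hne
        exact h q.2.1 q.2.2 p.1 q.1 hne hx.2.symm hy.2.symm hx'.2.symm hy'.2.symm
      exact Sigma.ext h1 (by rw [h2])
  have keyn : ∑ v : Fin n, d v ^ 2 ≤ n ^ 2 + ∑ v : Fin n, d v := by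
    have h1 : ∀ v : Fin n, d v ^ 2 ≤ ((univ.filter (fun w => G.Adj v w)).offDiag).card + d v := by
      intro v
      rw [Finset.offDiag_card, pow_two]
      have hc : (univ.filter (fun w => G.Adj v w)).card = d v := rfl
      rw [hc]
      rcases Nat.eq_zero_or_pos (d v) with h0 | h0
      · simp [h0]
      · have hle := Nat.le_mul_of_pos_left (d v) h0
        omega
    calc ∑ v : Fin n, d v ^ 2
        ≤ ∑ v : Fin n, (((univ.filter (fun w => G.Adj v w)).offDiag).card + d v) :=
          Finset.sum_le_sum fun v _ => h1 v
      _ = (∑ v : Fin n, ((univ.filter (fun w => G.Adj v w)).offDiag).card) + ∑ v : Fin n, d v :=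
          Finset.sum_add_distrib
      _ ≤ ((univ : Finset (Fin n)).offDiag).card + ∑ v : Fin n, d v := by gcongr
      _ ≤ n ^ 2 + ∑ v : Fin n, d v := by
          rw [Finset.offDiag_card, Finset.card_univ, Fintype.card_fin]
          exact Nat.add_le_add_right (le_trans (Nat.sub_le _ _) (le_of_eq (pow_two n).symm)) _
  set S : ℝ := ∑ v : Fin n, (d v : ℝ) with hS
  set Q : ℝ := ∑ v : Fin n, (d v : ℝ) ^ 2 with hQ
  have hSn : 0 ≤ S := Finset.sum_nonneg fun v _ => by positivity
  have hQle : Q ≤ (n : ℝ) ^ 2 + S := by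
    rw [hQ, hS]
    exact_mod_cast keyn
  have hCS : S ^ 2 ≤ (n : ℝ) * Q := by
    have := sq_sum_le_card_mul_sum_sq (s := (univ : Finset (Fin n))) (f := fun v => (d v : ℝ))
    simpa [hS, hQ] using this
  set t : ℝ := (n : ℝ) ^ ((3 : ℝ) / 2) with ht
  have htn : 0 ≤ t := Real.rpow_nonneg (by positivity) _
  have ht2 : t ^ 2 = (n : ℝ) ^ 3 := by
    rw [ht, ← Real.rpow_natCast ((n : ℝ) ^ ((3 : ℝ) / 2)) 2,
      ← Real.rpow_mul (Nat.cast_nonneg n),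
      show ((3 : ℝ) / 2) * ((2 : ℕ) : ℝ) = ((3 : ℕ) : ℝ) by push_cast; ring,
      Real.rpow_natCast]
  have htge : (n : ℝ) ≤ t := by
    rcases Nat.eq_zero_or_pos n with h0 | h0
    · simp [ht, h0]
    · rw [ht]
      calc (n : ℝ) = (n : ℝ) ^ (1 : ℝ) := (Real.rpow_one _).symm
        _ ≤ (n : ℝ) ^ ((3 : ℝ) / 2) :=
            Real.rpow_le_rpow_of_exponent_le (by exact_mod_cast h0) (by norm_num)
  have hSle : S ≤ (n : ℝ) + t := by
    nlinarith [sq_nonneg (S - t), sq_nonneg (S + t), sq_nonneg ((n : ℝ) - t)]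
  have hfin : ∑ v : Fin n, (deg G v : ℝ) ^ 2 = Q := by
    rw [hQ]; exact Finset.sum_congr rfl fun v _ => by rw [hdeg v]
  rw [hfin]
  nlinarith [htge, htn, hSle, hQle]
end

section
/- If G is a C₄-free bipartite simple graph with parts of sizes a and b where a ≤ b, then e(G) ≤ a·√b + 2b. -/
open Finset

private lemma nat_le_mul_self (n : ℕ) : n ≤ n * n := by
  rcases Nat.eq_zero_or_pos n with h | h
  · simp [h]
  · exact Nat.le_mul_of_pos_left n h

set_option maxRecDepth 8000 in
theorem c4free_bipartite_edge_bound (a b : ℕ) (hab : a ≤ b)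
    (G : SimpleGraph (Fin a ⊕ Fin b))
    (hbip : ∀ x y, G.Adj x y →
      (x.isLeft = true ∧ y.isRight = true) ∨ (x.isRight = true ∧ y.isLeft = true))
    (h : C4Free G) :
    (Nat.card G.edgeSet : ℝ) ≤ (a : ℝ) * Real.sqrt b + 2 * b := by
  classical
  set N : Fin b → Finset (Fin a) :=
    fun y => univ.filter (fun x => G.Adj (Sum.inl x) (Sum.inr y)) with hN
  set d : Fin b → ℕ := fun y => (N y).card with hd
  -- edge count equals sum of right degrees
  have hP : (univ.filter (fun p : Fin a × Fin b =>
      G.Adj (Sum.inl p.1) (Sum.inr p.2))).card = ∑ y, d y := by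
    rw [Finset.card_filter, Fintype.sum_prod_type, Finset.sum_comm]
    simp only [hd, hN, Finset.card_filter]
  have hEF : Nat.card G.edgeSet = G.edgeFinset.card := by
    rw [SimpleGraph.edgeFinset, Nat.card_coe_set_eq, Set.ncard_eq_toFinset_card']
  have hE : Nat.card G.edgeSet = ∑ y, d y := by
    rw [hEF, ← hP]
    refine (Finset.card_bij
      (fun p _ => s(Sum.inl p.1, Sum.inr p.2)) ?_ ?_ ?_).symm
    · intro p hp
      simp only [mem_filter] at hp
      simpa [SimpleGraph.mem_edgeFinset] using hp.2
    · intro p hp q hq hpq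
      rw [Sym2.eq_iff] at hpq
      rcases hpq with ⟨h1, h2⟩ | ⟨h1, h2⟩
      · exact Prod.ext (Sum.inl.inj h1) (Sum.inr.inj h2)
      · exact absurd h1 (by simp)
    · intro e he
      rw [SimpleGraph.mem_edgeFinset] at he
      induction e with
      | h u v =>
        rw [SimpleGraph.mem_edgeSet] at he
        rcases hbip u v he with ⟨hu, hv⟩ | ⟨hu, hv⟩
        · obtain ⟨x, rfl⟩ := Sum.isLeft_iff.mp hu
          obtain ⟨y, rfl⟩ := Sum.isRight_iff.mp hv
          exact ⟨(x, y), by simpa using he, rfl⟩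
        · obtain ⟨y, rfl⟩ := Sum.isRight_iff.mp hu
          obtain ⟨x, rfl⟩ := Sum.isLeft_iff.mp hv
          exact ⟨(x, y), by simpa using he.symm, Sym2.eq_swap⟩
  -- C4-freeness: the offDiags of the neighborhoods are pairwise disjoint
  have hdisj : ∀ y ∈ (univ : Finset (Fin b)), ∀ y' ∈ univ, y ≠ y' →
      Disjoint ((N y).offDiag) ((N y').offDiag) := by
    intro y _ y' _ hyy'
    rw [Finset.disjoint_left]
    rintro ⟨x, x'⟩ hq hq'
    simp only [Finset.mem_offDiag, hN, mem_filter] at hq hq'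
    have := h (Sum.inl x) (Sum.inl x') (Sum.inr y) (Sum.inr y')
      (by simpa using hq.2.2) hq.1.2 hq.2.1.2 hq'.1.2 hq'.2.1.2
    exact hyy' (Sum.inr.inj this)
  have hkey : ∑ y, (d y * d y - d y) ≤ a * a - a := by
    calc ∑ y, (d y * d y - d y) = ∑ y, ((N y).offDiag).card := by
          simp [Finset.offDiag_card, hd]
      _ = ((univ : Finset (Fin b)).biUnion (fun y => (N y).offDiag)).card :=
          (Finset.card_biUnion hdisj).symm
      _ ≤ ((univ : Finset (Fin a)).offDiag).card := by
          apply Finset.card_le_card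
          intro q hq
          simp only [Finset.mem_biUnion, Finset.mem_offDiag, hN, mem_filter] at hq ⊢
          obtain ⟨y, _, h1, h2, h3⟩ := hq
          exact ⟨mem_univ _, mem_univ _, h3⟩
      _ = a * a - a := by simp [Finset.offDiag_card]
  -- sum of squares bound in ℕ
  have hsq : ∑ y, d y * d y ≤ a * a + ∑ y, d y := by
    have heq : ∑ y, d y * d y = ∑ y, ((d y * d y - d y) + d y) := by
      refine Finset.sum_congr rfl (fun y _ => ?_)
      rw [Nat.sub_add_cancel (nat_le_mul_self _)]
    rw [heq, Finset.sum_add_distrib]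
    exact Nat.add_le_add_right (le_trans hkey (Nat.sub_le _ _)) _
  -- Cauchy-Schwarz over ℝ
  set e : ℕ := ∑ y, d y with he
  have hcs : (e : ℝ)^2 ≤ (b : ℝ) * ((a:ℝ)^2 + e) := by
    have h1 : ((∑ y, (d y : ℝ)))^2 ≤ (∑ y : Fin b, (d y : ℝ)^2) * (∑ _y : Fin b, (1:ℝ)^2) := by
      simpa using Finset.sum_mul_sq_le_sq_mul_sq univ (fun y => (d y : ℝ)) (fun _ => 1)
    have h2 : (∑ y : Fin b, (d y : ℝ)^2) ≤ (a:ℝ)^2 + e := by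
      calc (∑ y : Fin b, (d y : ℝ)^2) = ((∑ y, d y * d y : ℕ) : ℝ) := by
            push_cast; simp [pow_two]
        _ ≤ ((a * a + ∑ y, d y : ℕ) : ℝ) := by exact_mod_cast hsq
        _ = (a:ℝ)^2 + e := by rw [he]; push_cast; ring
    calc (e:ℝ)^2 = ((∑ y, (d y : ℝ)))^2 := by rw [he]; push_cast; ring
      _ ≤ (∑ y : Fin b, (d y : ℝ)^2) * b := by simpa using h1
      _ ≤ ((a:ℝ)^2 + e) * b := mul_le_mul_of_nonneg_right h2 (by positivity)
      _ = (b:ℝ) * ((a:ℝ)^2 + e) := by ring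
  rw [hE]
  -- final real arithmetic
  clear_value N d e
  clear hP hE hdisj hkey hsq he hd hN d N h hbip hEF G
  set s : ℝ := Real.sqrt b with hs
  have hs0 : 0 ≤ s := Real.sqrt_nonneg _
  have hs2 : s^2 = b := Real.sq_sqrt (by positivity)
  have ha0 : (0:ℝ) ≤ a := by positivity
  have he0 : (0:ℝ) ≤ e := by positivity
  have hb0 : (0:ℝ) ≤ b := by positivity
  by_contra hlt
  push_neg at hlt
  have h3 : (e:ℝ)^2 - e*b ≤ b*a^2 := by nlinarith [hcs]
  have h4 : ((a:ℝ)*s + 2*b)*((a:ℝ)*s + b) ≤ (e:ℝ)*((e:ℝ)-b) := by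
    apply mul_le_mul hlt.le (by linarith) (by positivity) (by linarith)
  have haux : (a:ℝ)^2*s^2 = a^2*b := by rw [hs2]
  have hasb : (0:ℝ) ≤ a*s*b := by positivity
  have hbb : (b:ℝ)^2 ≤ 0 := by nlinarith [h3, h4, haux, hasb]
  have hbz : (b:ℝ) = 0 := by
    have h5 := sq_nonneg (b:ℝ)
    have h6 : (b:ℝ)^2 = 0 := le_antisymm hbb h5
    exact pow_eq_zero_iff (by norm_num) |>.mp h6
  have hsz : s = 0 := by
    have h7 : s^2 = 0 := by rw [hs2, hbz]
    exact pow_eq_zero_iff (by norm_num) |>.mp h7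
  rw [hbz, hsz] at hlt
  have hepos : (0:ℝ) < e := by nlinarith [mul_nonneg ha0 hs0]
  nlinarith [hcs, hbz, mul_pos hepos hepos]
end

section
/- Let G be a C₄-free graph on n vertices, and order the vertices v₁, ..., vₙ so that for each i, vᵢ has minimum degree in the induced subgraph G[{vᵢ, ..., vₙ}]. Let dᵢ* denote the degree of vᵢ in G[{vᵢ, ..., vₙ}]. Then for every i, dᵢ* ≤ √(n − i + 1) + 1. -/
/-- Degree of `v` among the vertices `k ≥ i`. -/
noncomputable def degAbove {n : ℕ} (G : SimpleGraph (Fin n)) (i v : Fin n) : ℕ :=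
  Nat.card {k : Fin n | i ≤ k ∧ G.Adj v k}

open scoped Classical in
private lemma natcard_filter {α : Type*} [Fintype α] (p : α → Prop) :
    Nat.card {x : α | p x} = (Finset.univ.filter p).card := by
  rw [Nat.card_eq_fintype_card]
  exact Fintype.card_subtype p

open scoped Classical in
theorem right_degree_bound (n : ℕ) (G : SimpleGraph (Fin n)) (h : C4Free G)
    (hmin : ∀ i j : Fin n, i ≤ j → degAbove G i i ≤ degAbove G i j) :
    ∀ i : Fin n,
      (Nat.card {j : Fin n | i < j ∧ G.Adj i j} : ℝ) ≤
        Real.sqrt ((n : ℝ) - (i : ℕ)) + 1 := by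
  intro i
  set A : Finset (Fin n) := Finset.univ.filter (fun j => i < j ∧ G.Adj i j) with hA
  set B : Finset (Fin n) := Finset.univ.filter (fun k => i ≤ k) with hB
  set d : ℕ := A.card with hd
  have hgoal : Nat.card {j : Fin n | i < j ∧ G.Adj i j} = d := by
    rw [hd, hA, natcard_filter]
    congr 1
    ext j
    simp
  rw [hgoal]
  have hmemA : ∀ j, j ∈ A ↔ i < j ∧ G.Adj i j := by
    intro j; simp [hA]
  have hdegAbove : ∀ v, degAbove G i v = (B.filter (fun k => G.Adj v k)).card := by
    intro v
    rw [degAbove, natcard_filter]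
    congr 1
    ext k; simp [hB]
  have hdi : degAbove G i i = d := by
    rw [hdegAbove, hd]
    congr 1
    ext k
    simp only [hA, hB, Finset.mem_filter, Finset.mem_univ, true_and]
    constructor
    · rintro ⟨hle, hadj⟩
      exact ⟨lt_of_le_of_ne hle (fun e => G.loopless.irrefl i (e ▸ hadj)), hadj⟩
    · rintro ⟨hlt, hadj⟩; exact ⟨hlt.le, hadj⟩
  have hlow : d * d ≤ ∑ j ∈ A, (B.filter (fun k => G.Adj j k)).card := by
    calc d * d = ∑ _j ∈ A, d := by rw [Finset.sum_const, smul_eq_mul, mul_comm]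
    _ ≤ _ := by
        apply Finset.sum_le_sum
        intro j hj
        rw [hmemA] at hj
        have := hmin i j hj.1.le
        rwa [hdi, hdegAbove j] at this
  have hswap : ∑ j ∈ A, (B.filter (fun k => G.Adj j k)).card
      = ∑ k ∈ B, (A.filter (fun j => G.Adj j k)).card := by
    simp only [Finset.card_filter]
    exact Finset.sum_comm
  have hiB : i ∈ B := by simp [hB]
  have hterm : (A.filter (fun j => G.Adj j i)).card = d := by
    rw [hd]; congr 1
    apply Finset.filter_true_of_mem
    intro j hj
    exact ((hmemA j).1 hj).2.symm
  have hone : ∀ k ∈ B.erase i, (A.filter (fun j => G.Adj j k)).card ≤ 1 := by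
    intro k hk
    rw [Finset.mem_erase] at hk
    apply Finset.card_le_one.2
    intro a ha b hb
    rw [Finset.mem_filter] at ha hb
    obtain ⟨haA, hak⟩ := ha
    obtain ⟨hbA, hbk⟩ := hb
    exact h i k a b (fun e => hk.1 e.symm) ((hmemA a).1 haA).2 hak.symm
      ((hmemA b).1 hbA).2 hbk.symm
  have hBcard : B.card = n - i := by
    have : B = Finset.Ici i := by ext k; simp [hB]
    rw [this, Fin.card_Ici]
  have hup : ∑ k ∈ B, (A.filter (fun j => G.Adj j k)).card ≤ d + (n - (i : ℕ) - 1) := by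
    rw [← Finset.add_sum_erase _ _ hiB, hterm]
    gcongr
    calc ∑ k ∈ B.erase i, (A.filter (fun j => G.Adj j k)).card
        ≤ ∑ _k ∈ B.erase i, 1 := Finset.sum_le_sum hone
      _ = (B.erase i).card := by simp
      _ = n - (i : ℕ) - 1 := by rw [Finset.card_erase_of_mem hiB, hBcard]
  have hkey : d * d ≤ d + (n - (i : ℕ) - 1) := le_trans (hlow.trans_eq hswap) hup
  -- pass to reals
  have hin : (i : ℕ) < n := i.isLt
  have hcast : ((n - (i : ℕ) - 1 : ℕ) : ℝ) = (n : ℝ) - (i : ℕ) - 1 := by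
    have h1 : 1 ≤ n - (i : ℕ) := by omega
    rw [Nat.cast_sub h1, Nat.cast_sub hin.le, Nat.cast_one]
  have hkeyR : (d : ℝ) * d ≤ (d : ℝ) + ((n : ℝ) - (i : ℕ) - 1) := by
    have := hkey
    calc (d : ℝ) * d = ((d * d : ℕ) : ℝ) := by push_cast; ring
      _ ≤ ((d + (n - (i : ℕ) - 1) : ℕ) : ℝ) := by exact_mod_cast hkey
      _ = (d : ℝ) + ((n : ℝ) - (i : ℕ) - 1) := by rw [Nat.cast_add, hcast]
  set s := Real.sqrt ((n : ℝ) - (i : ℕ)) with hs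
  have hs0 : 0 ≤ s := Real.sqrt_nonneg _
  have hs2 : s ^ 2 = (n : ℝ) - (i : ℕ) := by
    rw [hs, Real.sq_sqrt]
    have : (i : ℝ) ≤ n := by exact_mod_cast hin.le
    linarith
  rcases Nat.eq_zero_or_pos d with h0 | h1
  · rw [h0]; push_cast; linarith
  · have hd1 : (1 : ℝ) ≤ d := by exact_mod_cast h1
    nlinarith [sq_nonneg ((d : ℝ) - 1 - s)]
end

section
/- Let r be an odd positive integer and let S be a function assigning to each edge f of the complete graph Kₙ a nonempty subset S(f) ⊆ {1, ..., r}, such that for every triangle {e, f, g} in Kₙ and every a ∈ S(e), b ∈ S(f), c ∈ S(g), the triple (a,b,c) satisfies the triangle inequality. Then Σ_f |S(f)| ≤ m(r)·C(n, 2) + r·n, where m(r) = ⌈(r+1)/2⌉. -/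
open Finset

section Aux

lemma two_le_div_add_div {a b : ℚ} (ha : 0 < a) (hb : 0 < b) : 2 ≤ b / a + a / b := by
  rw [div_add_div _ _ (ne_of_gt ha) (ne_of_gt hb), le_div_iff₀ (by positivity)]
  nlinarith [sq_nonneg (a - b)]

lemma furedi_sq {V : Type*} [Fintype V] [DecidableEq V] (G H : SimpleGraph V)
    [DecidableRel G.Adj] [DecidableRel H.Adj]
    (hGH : ∀ x y z : V, x ≠ z → G.Adj x y → G.Adj y z → H.Adj x z) :
    G.edgeFinset.card ≤ H.edgeFinset.card + Fintype.card V := by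
  let d : V → ℕ := fun v => (G.neighborFinset v).card
  have hdeg : ∀ v, G.degree v = d v := fun v => rfl
  have claim1 : ∀ v y : V, G.Adj v y → d y ≤ H.degree v + 1 := by
    intro v y hvy
    have hsub : G.neighborFinset y ⊆ insert v (H.neighborFinset v) := by
      intro w hw
      rw [SimpleGraph.mem_neighborFinset] at hw
      by_cases hwv : w = v
      · simp [hwv]
      · refine mem_insert_of_mem ?_
        rw [SimpleGraph.mem_neighborFinset]
        exact hGH v y w (fun h => hwv h.symm) hvy hw
    calc d y ≤ (insert v (H.neighborFinset v)).card := card_le_card hsub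
    _ ≤ H.degree v + 1 := card_insert_le _ _
  let M : V → ℕ := fun v => (G.neighborFinset v).sup d
  have lemA : ∀ v, M v ≤ H.degree v + 1 := by
    intro v
    apply Finset.sup_le
    intro y hy
    exact claim1 v y ((SimpleGraph.mem_neighborFinset _ _ _).1 hy)
  have lemB : ∑ v, d v ≤ ∑ v, M v := by
    have key : ∑ v, (d v : ℚ) ≤ ∑ v, (M v : ℚ) := by
      have e1 : ∀ v, (d v : ℚ) = ∑ y ∈ G.neighborFinset v, (1 : ℚ) := by
        intro v; simp [d]
      have e2 : ∀ v, ∑ y ∈ G.neighborFinset v, (d y : ℚ) / (d v : ℚ) ≤ (M v : ℚ) := by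
        intro v
        rcases eq_or_ne (d v) 0 with h0 | h0
        · have : G.neighborFinset v = ∅ := by
            rwa [card_eq_zero] at h0
          simp [this]
        · rw [← Finset.sum_div, div_le_iff₀ (by positivity)]
          have hsum : ∑ y ∈ G.neighborFinset v, d y ≤ M v * d v := by
            calc ∑ y ∈ G.neighborFinset v, d y ≤ (G.neighborFinset v).card • M v :=
              Finset.sum_le_card_nsmul _ _ _ (fun y hy => Finset.le_sup hy)
            _ = M v * d v := by rw [smul_eq_mul, mul_comm]
          exact_mod_cast hsum
      have e3 : ∑ v, ∑ y ∈ G.neighborFinset v, (1:ℚ) ≤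
          ∑ v, ∑ y ∈ G.neighborFinset v, (d y : ℚ) / (d v : ℚ) := by
        classical
        set AP : Finset (V × V) := Finset.univ.filter (fun p : V × V => G.Adj p.1 p.2) with hAP
        have hmemAP : ∀ p : V × V, p ∈ AP ↔ G.Adj p.1 p.2 := by
          intro p; simp [hAP]
        have conv : ∀ f : V → V → ℚ, ∑ v, ∑ y ∈ G.neighborFinset v, f v y
            = ∑ p ∈ AP, f p.1 p.2 := by
          intro f
          rw [hAP, ← Finset.univ_product_univ, Finset.sum_filter, Finset.sum_product]
          apply Finset.sum_congr rfl
          intro v _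
          rw [SimpleGraph.neighborFinset_eq_filter, Finset.sum_filter]
        rw [conv, conv]
        have swap : ∑ p ∈ AP, (d p.2 : ℚ) / (d p.1 : ℚ)
            = ∑ p ∈ AP, (d p.1 : ℚ) / (d p.2 : ℚ) := by
          apply Finset.sum_nbij' (fun p => Prod.swap p) (fun p => Prod.swap p)
          · intro p hp; rw [hmemAP] at hp ⊢; exact hp.symm
          · intro p hp; rw [hmemAP] at hp ⊢; exact hp.symm
          · intro p _; simp
          · intro p _; simp
          · intro p _; simp
        have pos : ∀ p ∈ AP, (2 : ℚ) ≤ (d p.2 : ℚ) / (d p.1 : ℚ) + (d p.1 : ℚ) / (d p.2 : ℚ) := by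
          intro p hp
          rw [hmemAP] at hp
          have h1 : 0 < d p.1 := by
            have := (G.degree_pos_iff_exists_adj p.1).2 ⟨p.2, hp⟩
            rwa [hdeg] at this
          have h2 : 0 < d p.2 := by
            have := (G.degree_pos_iff_exists_adj p.2).2 ⟨p.1, hp.symm⟩
            rwa [hdeg] at this
          exact two_le_div_add_div (by exact_mod_cast h1) (by exact_mod_cast h2)
        have big : ∑ p ∈ AP, (2:ℚ)
            ≤ ∑ p ∈ AP, ((d p.2 : ℚ) / (d p.1 : ℚ) + (d p.1 : ℚ) / (d p.2 : ℚ)) :=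
          Finset.sum_le_sum pos
        rw [Finset.sum_add_distrib, ← swap] at big
        have c1 : ∑ p ∈ AP, (2:ℚ) = 2 * (AP.card : ℚ) := by
          rw [Finset.sum_const, nsmul_eq_mul, mul_comm]
        have c2 : ∑ p ∈ AP, (1:ℚ) = (AP.card : ℚ) := by
          rw [Finset.sum_const, nsmul_eq_mul, mul_one]
        rw [c1] at big
        rw [c2]
        linarith
      calc ∑ v, (d v : ℚ) = ∑ v, ∑ y ∈ G.neighborFinset v, (1:ℚ) :=
            Finset.sum_congr rfl (fun v _ => e1 v)
        _ ≤ ∑ v, ∑ y ∈ G.neighborFinset v, (d y : ℚ) / (d v : ℚ) := e3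
        _ ≤ ∑ v, (M v : ℚ) := Finset.sum_le_sum (fun v _ => e2 v)
    exact_mod_cast key
  have hA : 2 * G.edgeFinset.card ≤ 2 * H.edgeFinset.card + 2 * Fintype.card V := by
    calc 2 * G.edgeFinset.card = ∑ v, G.degree v := (G.sum_degrees_eq_twice_card_edges).symm
    _ = ∑ v, d v := Finset.sum_congr rfl (fun v _ => hdeg v)
    _ ≤ ∑ v, M v := lemB
    _ ≤ ∑ v, (H.degree v + 1) := Finset.sum_le_sum (fun v _ => lemA v)
    _ = 2 * H.edgeFinset.card + Fintype.card V := by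
        rw [Finset.sum_add_distrib, H.sum_degrees_eq_twice_card_edges]
        simp
    _ ≤ 2 * H.edgeFinset.card + 2 * Fintype.card V := by omega
  omega

lemma filter_card_swap {α β : Type*} (s : Finset α) (u : Finset β) (P : α → β → Prop)
    [∀ a b, Decidable (P a b)] :
    ∑ a ∈ s, (u.filter (fun b => P a b)).card = ∑ b ∈ u, (s.filter (fun a => P a b)).card := by
  simp_rw [Finset.card_filter]
  exact Finset.sum_comm

/-- the "low label" graph -/
def GaG {n : ℕ} (D : Sym2 (Fin n) → ℕ) (a : ℕ) : SimpleGraph (Fin n) where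
  Adj x z := x ≠ z ∧ D s(x, z) ≤ a
  symm := by
    constructor
    intro x z h
    exact ⟨h.1.symm, by rw [Sym2.eq_swap]; exact h.2⟩
  loopless := ⟨fun x h => h.1 rfl⟩

/-- the square graph -/
def HaG {n : ℕ} (D : Sym2 (Fin n) → ℕ) (a : ℕ) : SimpleGraph (Fin n) where
  Adj x z := x ≠ z ∧ ∃ y, y ≠ x ∧ y ≠ z ∧ D s(x, y) ≤ a ∧ D s(y, z) ≤ a
  symm := by
    constructor
    rintro x z ⟨h, y, h1, h2, h3, h4⟩
    refine ⟨h.symm, y, h2, h1, ?_, ?_⟩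
    · rw [Sym2.eq_swap]; exact h4
    · rw [Sym2.eq_swap]; exact h3
  loopless := ⟨fun x h => h.1 rfl⟩

@[simp] lemma GaG_adj {n : ℕ} (D : Sym2 (Fin n) → ℕ) (a : ℕ) (x z : Fin n) :
    (GaG D a).Adj x z ↔ x ≠ z ∧ D s(x, z) ≤ a := Iff.rfl

@[simp] lemma HaG_adj {n : ℕ} (D : Sym2 (Fin n) → ℕ) (a : ℕ) (x z : Fin n) :
    (HaG D a).Adj x z ↔ x ≠ z ∧ ∃ y, y ≠ x ∧ y ≠ z ∧ D s(x, y) ≤ a ∧ D s(y, z) ≤ a := Iff.rfl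

end Aux

theorem metric_edge_labelling_odd (n r : ℕ) (hr : 0 < r) (hro : Odd r)
    (S : Sym2 (Fin n) → Finset ℕ)
    (hne : ∀ e : Sym2 (Fin n), ¬e.IsDiag → (S e).Nonempty)
    (hsub : ∀ e : Sym2 (Fin n), ¬e.IsDiag → S e ⊆ Finset.Icc 1 r)
    (htri : ∀ x y z : Fin n, x ≠ y → y ≠ z → x ≠ z →
      ∀ a ∈ S s(x, y), ∀ b ∈ S s(y, z), ∀ c ∈ S s(x, z),
        a + b ≥ c ∧ a + c ≥ b ∧ b + c ≥ a) :
    ∑ e ∈ Finset.univ.filter (fun e : Sym2 (Fin n) => ¬e.IsDiag), (S e).card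
      ≤ mval r * n.choose 2 + r * n := by
  classical
  obtain ⟨t, ht⟩ := hro
  have htr : r = 2 * t + 1 := by omega
  set ND : Finset (Sym2 (Fin n)) := Finset.univ.filter (fun e : Sym2 (Fin n) => ¬e.IsDiag)
    with hND
  have hmemND : ∀ e : Sym2 (Fin n), e ∈ ND ↔ ¬e.IsDiag := by
    intro e; simp [hND]
  -- minimum of a label set
  set Dm : Sym2 (Fin n) → ℕ :=
    fun e => if h : (S e).Nonempty then (S e).min' h else 1 with hDm
  have hDmmem : ∀ e : Sym2 (Fin n), ¬e.IsDiag → Dm e ∈ S e := by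
    intro e he
    have h := hne e he
    simp only [hDm, dif_pos h]
    exact (S e).min'_mem h
  have hDmle : ∀ e : Sym2 (Fin n), ¬e.IsDiag → ∀ c ∈ S e, Dm e ≤ c := by
    intro e he c hc
    have h := hne e he
    simp only [hDm, dif_pos h]
    exact (S e).min'_le c hc
  have hDm1 : ∀ e : Sym2 (Fin n), ¬e.IsDiag → 1 ≤ Dm e :=
    fun e he => (Finset.mem_Icc.1 (hsub e he (hDmmem e he))).1
  have hDmr : ∀ e : Sym2 (Fin n), ¬e.IsDiag → Dm e ≤ r :=
    fun e he => (Finset.mem_Icc.1 (hsub e he (hDmmem e he))).2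
  -- the "midpoint bound"
  set Bb : Sym2 (Fin n) → ℕ := fun e =>
    sInf ({r} ∪ {v | ∃ x z y : Fin n, e = s(x, z) ∧ y ≠ x ∧ y ≠ z
      ∧ v = Dm s(x, y) + Dm s(y, z)}) with hBb
  have hBr : ∀ e, Bb e ≤ r := fun e => Nat.sInf_le (Or.inl rfl)
  have hBle : ∀ x z y : Fin n, y ≠ x → y ≠ z → Bb s(x, z) ≤ Dm s(x, y) + Dm s(y, z) :=
    fun x z y h1 h2 => Nat.sInf_le (Or.inr ⟨x, z, y, rfl, h1, h2, rfl⟩)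
  have hcB : ∀ e : Sym2 (Fin n), ¬e.IsDiag → ∀ c ∈ S e, c ≤ Bb e := by
    intro e he c hc
    apply le_csInf ⟨r, Or.inl rfl⟩
    rintro v (rfl | ⟨x, z, y, rfl, hyx, hyz, rfl⟩)
    · exact (Finset.mem_Icc.1 (hsub e he hc)).2
    · have hxz : x ≠ z := by
        rw [Sym2.mk_isDiag_iff] at he; exact he
      have hxy : x ≠ y := fun h => hyx h.symm
      have hnd1 : ¬(s(x, y) : Sym2 (Fin n)).IsDiag := by
        rw [Sym2.mk_isDiag_iff]; exact hxy
      have hnd2 : ¬(s(y, z) : Sym2 (Fin n)).IsDiag := by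
        rw [Sym2.mk_isDiag_iff]; exact hyz
      have ha := hDmmem _ hnd1
      have hb := hDmmem _ hnd2
      have := (htri x y z hxy hyz hxz _ ha _ hb c hc).1
      omega
  have hDB : ∀ e : Sym2 (Fin n), ¬e.IsDiag → Dm e ≤ Bb e :=
    fun e he => hcB e he _ (hDmmem e he)
  -- edge count
  have hE : ND.card = n.choose 2 := by
    have h1 : ND = (⊤ : SimpleGraph (Fin n)).edgeFinset := by
      ext e
      rw [hmemND, SimpleGraph.mem_edgeFinset, SimpleGraph.edgeSet_top]
      simp
    rw [h1, SimpleGraph.card_edgeFinset_top_eq_card_choose_two, Fintype.card_fin]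
  -- connection of Ga edges to filters
  have hC1 : ∀ a : ℕ, (GaG Dm a).edgeFinset = ND.filter (fun e => Dm e ≤ a) := by
    intro a
    ext e
    induction e using Sym2.ind with
    | _ x z =>
      rw [SimpleGraph.mem_edgeFinset, SimpleGraph.mem_edgeSet, Finset.mem_filter, hmemND,
        Sym2.mk_isDiag_iff, GaG_adj]
  -- per-edge card bound
  have stepA : ∀ e ∈ ND, (S e).card ≤ (Bb e - Dm e) + 1 := by
    intro e he
    rw [hmemND] at he
    have hsub2 : S e ⊆ Finset.Icc (Dm e) (Bb e) := by
      intro c hc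
      rw [Finset.mem_Icc]
      exact ⟨hDmle e he c hc, hcB e he c hc⟩
    calc (S e).card ≤ (Finset.Icc (Dm e) (Bb e)).card := Finset.card_le_card hsub2
    _ = Bb e + 1 - Dm e := Nat.card_Icc _ _
    _ ≤ (Bb e - Dm e) + 1 := by
        have := hDB e he
        omega
  -- per-edge layer cake
  have stepC : ∀ e ∈ ND, Bb e - Dm e
      = ((Finset.Icc 1 (r - 1)).filter (fun k => Dm e ≤ k ∧ k < Bb e)).card := by
    intro e he
    rw [hmemND] at he
    have h1 := hDm1 e he
    have h2 := hBr e
    have h3 := hDB e he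
    have : (Finset.Icc 1 (r - 1)).filter (fun k => Dm e ≤ k ∧ k < Bb e)
        = Finset.Icc (Dm e) (Bb e - 1) := by
      ext k
      simp only [Finset.mem_filter, Finset.mem_Icc]
      omega
    rw [this, Nat.card_Icc]
    omega
  -- per-k key inequality
  have stepE : ∀ k : ℕ,
      (ND.filter (fun e => Dm e ≤ k ∧ k < Bb e)).card
        + (ND.filter (fun e => Dm e ≤ k / 2)).card
      ≤ (ND.filter (fun e => Dm e ≤ k)).card + n := by
    intro k
    have hsq : ∀ x y z : Fin n, x ≠ z → (GaG Dm (k / 2)).Adj x y → (GaG Dm (k / 2)).Adj y z →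
        (HaG Dm (k / 2)).Adj x z := by
      rintro x y z hxz ⟨hxy, h1⟩ ⟨hyz, h2⟩
      exact ⟨hxz, y, fun h => hxy h.symm, hyz, h1, h2⟩
    have hf := furedi_sq (GaG Dm (k / 2)) (HaG Dm (k / 2)) hsq
    rw [Fintype.card_fin, hC1] at hf
    -- H-edges are in U but not X
    have hHsub : (HaG Dm (k / 2)).edgeFinset
        ⊆ ND.filter (fun e => Dm e ≤ k ∧ ¬(k < Bb e)) := by
      intro e
      induction e using Sym2.ind with
      | _ x z =>
        rw [SimpleGraph.mem_edgeFinset, SimpleGraph.mem_edgeSet, HaG_adj]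
        rintro ⟨hxz, y, hyx, hyz, h1, h2⟩
        have hnd : ¬(s(x, z) : Sym2 (Fin n)).IsDiag := by
          rw [Sym2.mk_isDiag_iff]; exact hxz
        have hB : Bb s(x, z) ≤ k := by
          calc Bb s(x, z) ≤ Dm s(x, y) + Dm s(y, z) := hBle x z y hyx hyz
          _ ≤ k / 2 + k / 2 := by omega
          _ ≤ k := by omega
        rw [Finset.mem_filter, hmemND]
        exact ⟨hnd, le_trans (hDB _ hnd) hB, by omega⟩
    have hdisj : Disjoint (ND.filter (fun e => Dm e ≤ k ∧ k < Bb e))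
        ((HaG Dm (k / 2)).edgeFinset) := by
      rw [Finset.disjoint_left]
      intro e he1 he2
      have := hHsub he2
      rw [Finset.mem_filter] at this he1
      exact this.2.2 he1.2.2
    have hunion : (ND.filter (fun e => Dm e ≤ k ∧ k < Bb e)) ∪ (HaG Dm (k / 2)).edgeFinset
        ⊆ ND.filter (fun e => Dm e ≤ k) := by
      apply Finset.union_subset
      · intro e he
        rw [Finset.mem_filter] at he ⊢
        exact ⟨he.1, he.2.1⟩
      · intro e he
        have := hHsub he
        rw [Finset.mem_filter] at this ⊢
        exact ⟨this.1, this.2.1⟩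
    have hcards : (ND.filter (fun e => Dm e ≤ k ∧ k < Bb e)).card
        + ((HaG Dm (k / 2)).edgeFinset).card ≤ (ND.filter (fun e => Dm e ≤ k)).card := by
      rw [← Finset.card_union_of_disjoint hdisj]
      exact Finset.card_le_card hunion
    omega
  -- sums over k
  set K : Finset ℕ := Finset.Icc 1 (r - 1) with hK
  have hKcard : K.card = r - 1 := by rw [hK, Nat.card_Icc]; omega
  have stepF :
      (∑ k ∈ K, (ND.filter (fun e => Dm e ≤ k ∧ k < Bb e)).card)
        + ∑ k ∈ K, (ND.filter (fun e => Dm e ≤ k / 2)).card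
      ≤ (∑ k ∈ K, (ND.filter (fun e => Dm e ≤ k)).card) + (r - 1) * n := by
    rw [← Finset.sum_add_distrib]
    calc ∑ k ∈ K, ((ND.filter (fun e => Dm e ≤ k ∧ k < Bb e)).card
          + (ND.filter (fun e => Dm e ≤ k / 2)).card)
        ≤ ∑ k ∈ K, ((ND.filter (fun e => Dm e ≤ k)).card + n) :=
          Finset.sum_le_sum (fun k _ => stepE k)
      _ = (∑ k ∈ K, (ND.filter (fun e => Dm e ≤ k)).card) + (r - 1) * n := by
          rw [Finset.sum_add_distrib, Finset.sum_const, hKcard, smul_eq_mul]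
  have stepG : ∑ k ∈ K, (ND.filter (fun e => Dm e ≤ k)).card
      ≤ (∑ k ∈ K, (ND.filter (fun e => Dm e ≤ k / 2)).card) + t * ND.card := by
    rw [← filter_card_swap ND K (fun e k => Dm e ≤ k),
      ← filter_card_swap ND K (fun e k => Dm e ≤ k / 2)]
    calc ∑ e ∈ ND, (K.filter (fun k => Dm e ≤ k)).card
        ≤ ∑ e ∈ ND, ((K.filter (fun k => Dm e ≤ k / 2)).card + t) := by
          apply Finset.sum_le_sum
          intro e he
          rw [hmemND] at he
          have h1 := hDm1 e he
          have h2 := hDmr e he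
          have e1 : K.filter (fun k => Dm e ≤ k) = Finset.Icc (Dm e) (r - 1) := by
            ext k
            rw [hK]
            simp only [Finset.mem_filter, Finset.mem_Icc]
            omega
          have e2 : K.filter (fun k => Dm e ≤ k / 2) = Finset.Icc (2 * Dm e) (r - 1) := by
            ext k
            rw [hK]
            simp only [Finset.mem_filter, Finset.mem_Icc]
            omega
          rw [e1, e2, Nat.card_Icc, Nat.card_Icc]
          omega
      _ = (∑ e ∈ ND, (K.filter (fun k => Dm e ≤ k / 2)).card) + t * ND.card := by
          rw [Finset.sum_add_distrib, Finset.sum_const, smul_eq_mul, mul_comm]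
  -- main chain
  have main : ∑ e ∈ ND, (S e).card
      ≤ (∑ k ∈ K, (ND.filter (fun e => Dm e ≤ k ∧ k < Bb e)).card) + ND.card := by
    calc ∑ e ∈ ND, (S e).card ≤ ∑ e ∈ ND, ((Bb e - Dm e) + 1) :=
          Finset.sum_le_sum stepA
      _ = (∑ e ∈ ND, (Bb e - Dm e)) + ND.card := by
          rw [Finset.sum_add_distrib, Finset.sum_const, smul_eq_mul, mul_one]
      _ = (∑ e ∈ ND, (K.filter (fun k => Dm e ≤ k ∧ k < Bb e)).card)
          + ND.card := by
          rw [add_right_cancel_iff]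
          exact Finset.sum_congr rfl stepC
      _ = (∑ k ∈ K, (ND.filter (fun e => Dm e ≤ k ∧ k < Bb e)).card) + ND.card := by
          rw [add_right_cancel_iff]
          exact filter_card_swap ND K (fun e k => Dm e ≤ k ∧ k < Bb e)
  -- combine
  have hT : ∑ k ∈ K, (ND.filter (fun e => Dm e ≤ k ∧ k < Bb e)).card
      ≤ t * ND.card + (r - 1) * n := by
    omega
  have hmval : mval r = t + 1 := by
    rw [mval, htr]
    omega
  calc ∑ e ∈ ND, (S e).card
      ≤ (∑ k ∈ K, (ND.filter (fun e => Dm e ≤ k ∧ k < Bb e)).card) + ND.card := main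
    _ ≤ (t * ND.card + (r - 1) * n) + ND.card := by omega
    _ = (t + 1) * ND.card + (r - 1) * n := by ring
    _ ≤ (t + 1) * ND.card + r * n := by
        have : (r - 1) * n ≤ r * n := Nat.mul_le_mul_right n (by omega)
        omega
    _ = mval r * n.choose 2 + r * n := by rw [hmval, hE]
end

section
/- Let ε > 0 and let r be an even positive integer. Suppose S assigns to each edge f of Kₙ a nonempty subset S(f) ⊆ {1,...,r} with Σ_f |S(f)| ≥ (1+ε)·C(n,2)·(r/2+1). Then there are at least (ε/10)·C(n,3) triangles {e,f,g} of Kₙ for which some choice a ∈ S(e), b ∈ S(f), c ∈ S(g) violates the triangle inequality. -/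
lemma local_even_bound (k : ℕ) (A B C : Finset ℕ)
    (hA : A.Nonempty) (hB : B.Nonempty) (hC : C.Nonempty)
    (hAr : A ⊆ Finset.Icc 1 (k + k)) (hBr : B ⊆ Finset.Icc 1 (k + k))
    (hCr : C ⊆ Finset.Icc 1 (k + k))
    (h : ∀ a ∈ A, ∀ b ∈ B, ∀ c ∈ C, ¬(a + b < c ∨ a + c < b ∨ b + c < a)) :
    A.card + B.card + C.card ≤ 3 * (k + 1) := by
  set α := A.min' hA with hα
  set β := B.min' hB with hβ
  set γ := C.min' hC with hγ
  have hαA : α ∈ A := A.min'_mem hA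
  have hβB : β ∈ B := B.min'_mem hB
  have hγC : γ ∈ C := C.min'_mem hC
  have hA1 : ∀ a ∈ A, a ≤ β + γ := fun a ha => by
    have := h a ha β hβB γ hγC; omega
  have hB1 : ∀ b ∈ B, b ≤ α + γ := fun b hb => by
    have := h α hαA b hb γ hγC; omega
  have hC1 : ∀ c ∈ C, c ≤ α + β := fun c hc => by
    have := h α hαA β hβB c hc; omega
  have cA1 : A.card ≤ β + γ + 1 - α := by
    have : A ⊆ Finset.Icc α (β + γ) := fun a ha =>
      Finset.mem_Icc.2 ⟨A.min'_le a ha, hA1 a ha⟩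
    simpa [Nat.card_Icc] using Finset.card_le_card this
  have cB1 : B.card ≤ α + γ + 1 - β := by
    have : B ⊆ Finset.Icc β (α + γ) := fun b hb =>
      Finset.mem_Icc.2 ⟨B.min'_le b hb, hB1 b hb⟩
    simpa [Nat.card_Icc] using Finset.card_le_card this
  have cC1 : C.card ≤ α + β + 1 - γ := by
    have : C ⊆ Finset.Icc γ (α + β) := fun c hc =>
      Finset.mem_Icc.2 ⟨C.min'_le c hc, hC1 c hc⟩
    simpa [Nat.card_Icc] using Finset.card_le_card this
  have cA2 : A.card ≤ k + k + 1 - α := by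
    have : A ⊆ Finset.Icc α (k + k) := fun a ha =>
      Finset.mem_Icc.2 ⟨A.min'_le a ha, (Finset.mem_Icc.1 (hAr ha)).2⟩
    simpa [Nat.card_Icc] using Finset.card_le_card this
  have cB2 : B.card ≤ k + k + 1 - β := by
    have : B ⊆ Finset.Icc β (k + k) := fun b hb =>
      Finset.mem_Icc.2 ⟨B.min'_le b hb, (Finset.mem_Icc.1 (hBr hb)).2⟩
    simpa [Nat.card_Icc] using Finset.card_le_card this
  have cC2 : C.card ≤ k + k + 1 - γ := by
    have : C ⊆ Finset.Icc γ (k + k) := fun c hc =>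
      Finset.mem_Icc.2 ⟨C.min'_le c hc, (Finset.mem_Icc.1 (hCr hc)).2⟩
    simpa [Nat.card_Icc] using Finset.card_le_card this
  have hαb : 1 ≤ α ∧ α ≤ k + k := Finset.mem_Icc.1 (hAr hαA)
  have hβb : 1 ≤ β ∧ β ≤ k + k := Finset.mem_Icc.1 (hBr hβB)
  have hγb : 1 ≤ γ ∧ γ ≤ k + k := Finset.mem_Icc.1 (hCr hγC)
  have hαβγ : α ≤ β + γ := hA1 α hαA
  have hβαγ : β ≤ α + γ := hB1 β hβB
  have hγαβ : γ ≤ α + β := hC1 γ hγC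
  omega

lemma edge_triangle_count (n : ℕ) (x y : Fin n) (hxy : x ≠ y) :
    ((Finset.powersetCard 3 (Finset.univ : Finset (Fin n))).filter
      (fun T => ∀ v ∈ s(x,y), v ∈ T)).card = n - 2 := by
  classical
  have h2 : ({x, y} : Finset (Fin n)).card = 2 := Finset.card_pair hxy
  have hsd : (Finset.univ \ {x, y} : Finset (Fin n)).card = n - 2 := by
    rw [Finset.card_sdiff_of_subset (Finset.subset_univ _), h2, Finset.card_univ, Fintype.card_fin]
  rw [← hsd]
  refine (Finset.card_bij (fun z _ => insert z ({x, y} : Finset (Fin n))) ?_ ?_ ?_).symm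
  · intro z hz
    rw [Finset.mem_sdiff] at hz
    simp only [Finset.mem_filter, Finset.mem_powersetCard_univ, Sym2.mem_iff]
    refine ⟨by rw [Finset.card_insert_of_notMem hz.2, h2], ?_⟩
    rintro v (rfl | rfl) <;> simp
  · intro a1 ha1 a2 ha2 heq
    rw [Finset.mem_sdiff] at ha1 ha2
    have : a1 ∈ insert a2 ({x, y} : Finset (Fin n)) := by
      rw [← heq]; exact Finset.mem_insert_self _ _
    rcases Finset.mem_insert.1 this with h | h
    · exact h
    · exact absurd h ha1.2
  · intro T hT
    rw [Finset.mem_filter, Finset.mem_powersetCard_univ] at hT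
    obtain ⟨hT3, hmem⟩ := hT
    have hx : x ∈ T := hmem x (by simp)
    have hy : y ∈ T := hmem y (by simp)
    have hsub : ({x, y} : Finset (Fin n)) ⊆ T := by
      intro v hv; rcases Finset.mem_insert.1 hv with rfl | hv
      · exact hx
      · rw [Finset.mem_singleton] at hv; exact hv ▸ hy
    have h1 : (T \ {x, y}).card = 1 := by
      rw [Finset.card_sdiff_of_subset hsub, hT3, h2]
    obtain ⟨z, hz⟩ := Finset.card_eq_one.1 h1
    refine ⟨z, ?_, ?_⟩
    · have : z ∈ T \ {x, y} := hz ▸ Finset.mem_singleton_self z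
      rw [Finset.mem_sdiff] at this
      exact Finset.mem_sdiff.2 ⟨Finset.mem_univ _, this.2⟩
    · have := Finset.sdiff_union_of_subset hsub
      rw [hz] at this
      rw [show ({z} ∪ {x, y} : Finset (Fin n)) = insert z {x, y} by ext w; simp; tauto] at this
      exact this

lemma triangle_edge_set (n : ℕ) (x y z : Fin n) (hxy : x ≠ y) (hxz : x ≠ z) (hyz : y ≠ z) :
    ((Finset.univ.filter (fun e : Sym2 (Fin n) => ¬e.IsDiag)).filter
      (fun e => ∀ v ∈ e, v ∈ ({x, y, z} : Finset (Fin n)))) =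
      {s(x,y), s(y,z), s(x,z)} := by
  classical
  ext e
  induction e using Sym2.ind with
  | _ u v =>
    simp only [Finset.mem_filter, Finset.mem_univ, true_and, Sym2.mk_isDiag_iff,
      Sym2.mem_iff, Finset.mem_insert, Finset.mem_singleton, Sym2.eq_iff]
    constructor
    · rintro ⟨huv, hmem⟩
      have hu := hmem u (Or.inl rfl)
      have hv := hmem v (Or.inr rfl)
      rcases hu with rfl|rfl|rfl <;> rcases hv with rfl|rfl|rfl <;> tauto
    · rintro ((⟨rfl,rfl⟩|⟨rfl,rfl⟩)|(⟨rfl,rfl⟩|⟨rfl,rfl⟩)|⟨rfl,rfl⟩|⟨rfl,rfl⟩) <;>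
        exact ⟨by tauto, by rintro w (rfl|rfl) <;> tauto⟩

theorem supersaturation_even (ε : ℝ) (hε : 0 < ε) (n r : ℕ) (hr : 0 < r) (hre : Even r)
    (S : Sym2 (Fin n) → Finset ℕ)
    (hne : ∀ e : Sym2 (Fin n), ¬e.IsDiag → (S e).Nonempty)
    (hsub : ∀ e : Sym2 (Fin n), ¬e.IsDiag → S e ⊆ Finset.Icc 1 r)
    (hbig : (1 + ε) * (n.choose 2 : ℝ) * ((r : ℝ) / 2 + 1) ≤
      ∑ e ∈ Finset.univ.filter (fun e : Sym2 (Fin n) => ¬e.IsDiag), ((S e).card : ℝ)) :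
    ε / 10 * (n.choose 3 : ℝ) ≤
      (Nat.card {T : Finset (Fin n) | ∃ x y z : Fin n, x ≠ y ∧ y ≠ z ∧ x ≠ z ∧
        T = {x, y, z} ∧ ∃ a ∈ S s(x, y), ∃ b ∈ S s(y, z), ∃ c ∈ S s(x, z),
          a + b < c ∨ a + c < b ∨ b + c < a} : ℝ) := by
  classical
  obtain ⟨k, hk⟩ := hre
  have hk1 : 1 ≤ k := by omega
  subst hk
  set pred : Finset (Fin n) → Prop := fun T => ∃ x y z : Fin n, x ≠ y ∧ y ≠ z ∧ x ≠ z ∧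
        T = {x, y, z} ∧ ∃ a ∈ S s(x, y), ∃ b ∈ S s(y, z), ∃ c ∈ S s(x, z),
          a + b < c ∨ a + c < b ∨ b + c < a with hpreddef
  set E := Finset.univ.filter (fun e : Sym2 (Fin n) => ¬e.IsDiag) with hE
  set P3 := Finset.powersetCard 3 (Finset.univ : Finset (Fin n)) with hP3
  set w : Finset (Fin n) → ℕ :=
    fun T => ∑ e ∈ E.filter (fun e => ∀ v ∈ e, v ∈ T), (S e).card with hw
  -- double counting
  have hdouble : ∑ T ∈ P3, w T = ∑ e ∈ E, (S e).card * (n - 2) := by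
    simp only [hw, Finset.sum_filter]
    rw [Finset.sum_comm]
    refine Finset.sum_congr rfl fun e he => ?_
    have hnd : ¬e.IsDiag := by
      rw [hE, Finset.mem_filter] at he; exact he.2
    have hcnt : (P3.filter (fun T => ∀ v ∈ e, v ∈ T)).card = n - 2 := by
      induction e using Sym2.ind with
      | _ x y =>
        have hxy : x ≠ y := by simpa [Sym2.mk_isDiag_iff] using hnd
        exact edge_triangle_count n x y hxy
    rw [← Finset.sum_filter, Finset.sum_const, smul_eq_mul, hcnt, Nat.mul_comm]
  -- structure of triangles
  have htri : ∀ T ∈ P3, ∃ x y z : Fin n, x ≠ y ∧ y ≠ z ∧ x ≠ z ∧ T = {x, y, z} ∧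
      w T = (S s(x,y)).card + (S s(y,z)).card + (S s(x,z)).card := by
    intro T hT
    obtain ⟨x, y, z, hxy, hxz, hyz, hT3⟩ :=
      Finset.card_eq_three.1 (Finset.mem_powersetCard_univ.1 hT)
    refine ⟨x, y, z, hxy, hyz, hxz, hT3, ?_⟩
    have h12 : s(x,y) ≠ s(y,z) := by simp only [ne_eq, Sym2.eq_iff]; tauto
    have h13 : s(x,y) ≠ s(x,z) := by simp only [ne_eq, Sym2.eq_iff]; tauto
    have h23 : s(y,z) ≠ s(x,z) := by simp only [ne_eq, Sym2.eq_iff]; tauto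
    have hset : E.filter (fun e => ∀ v ∈ e, v ∈ T) = {s(x,y), s(y,z), s(x,z)} := by
      rw [hT3, hE]
      exact triangle_edge_set n x y z hxy hxz hyz
    simp only [hw]
    rw [hset, Finset.sum_insert (by simp [h12, h13]), Finset.sum_insert (by simp [h23]),
      Finset.sum_singleton, add_assoc]
  -- bounds on w
  have hub : ∀ T ∈ P3, w T ≤ 3 * (k + k) := by
    intro T hT
    obtain ⟨x, y, z, hxy, hyz, hxz, hT3, hwT⟩ := htri T hT
    have b1 : (S s(x,y)).card ≤ k + k := by
      have := Finset.card_le_card (hsub s(x,y) (by simpa [Sym2.mk_isDiag_iff] using hxy))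
      simpa [Nat.card_Icc] using this
    have b2 : (S s(y,z)).card ≤ k + k := by
      have := Finset.card_le_card (hsub s(y,z) (by simpa [Sym2.mk_isDiag_iff] using hyz))
      simpa [Nat.card_Icc] using this
    have b3 : (S s(x,z)).card ≤ k + k := by
      have := Finset.card_le_card (hsub s(x,z) (by simpa [Sym2.mk_isDiag_iff] using hxz))
      simpa [Nat.card_Icc] using this
    omega
  have hub' : ∀ T ∈ P3, ¬ pred T → w T ≤ 3 * (k + 1) := by
    intro T hT hnp
    obtain ⟨x, y, z, hxy, hyz, hxz, hT3, hwT⟩ := htri T hT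
    have hndxy : ¬(s(x,y)).IsDiag := by simpa [Sym2.mk_isDiag_iff] using hxy
    have hndyz : ¬(s(y,z)).IsDiag := by simpa [Sym2.mk_isDiag_iff] using hyz
    have hndxz : ¬(s(x,z)).IsDiag := by simpa [Sym2.mk_isDiag_iff] using hxz
    have hno : ∀ a ∈ S s(x,y), ∀ b ∈ S s(y,z), ∀ c ∈ S s(x,z),
        ¬(a + b < c ∨ a + c < b ∨ b + c < a) := by
      intro a ha b hb c hc habc
      exact hnp ⟨x, y, z, hxy, hyz, hxz, hT3, a, ha, b, hb, c, hc, habc⟩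
    have := local_even_bound k (S s(x,y)) (S s(y,z)) (S s(x,z))
      (hne _ hndxy) (hne _ hndyz) (hne _ hndxz)
      (hsub _ hndxy) (hsub _ hndyz) (hsub _ hndxz) hno
    omega
  -- sum split
  have hbg : (P3.filter pred).card + (P3.filter (fun T => ¬ pred T)).card = n.choose 3 := by
    rw [Finset.card_filter_add_card_filter_not, hP3, Finset.card_powersetCard,
      Finset.card_univ, Fintype.card_fin]
  have hsum1 : ∑ T ∈ P3.filter pred, w T ≤ (P3.filter pred).card * (3 * (k + k)) :=
    Finset.sum_le_card_nsmul _ _ _ (fun T hT => hub T (Finset.mem_of_mem_filter T hT))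
  have hsum2 : ∑ T ∈ P3.filter (fun T => ¬ pred T), w T ≤
      (P3.filter (fun T => ¬ pred T)).card * (3 * (k + 1)) :=
    Finset.sum_le_card_nsmul _ _ _ (fun T hT => by
      rw [Finset.mem_filter] at hT
      exact hub' T hT.1 hT.2)
  have hN : (∑ e ∈ E, (S e).card) * (n - 2) ≤
      (P3.filter pred).card * (3 * (k + k)) +
      (P3.filter (fun T => ¬ pred T)).card * (3 * (k + 1)) := by
    calc (∑ e ∈ E, (S e).card) * (n - 2)
        = ∑ e ∈ E, (S e).card * (n - 2) := by rw [Finset.sum_mul]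
      _ = ∑ T ∈ P3, w T := hdouble.symm
      _ = ∑ T ∈ P3.filter pred, w T + ∑ T ∈ P3.filter (fun T => ¬ pred T), w T :=
          (Finset.sum_filter_add_sum_filter_not P3 pred w).symm
      _ ≤ _ := add_le_add hsum1 hsum2
  -- choose identity
  have hchoose : n.choose 3 * 3 = n.choose 2 * (n - 2) := Nat.choose_succ_right_eq n 2
  -- pass to reals
  set b := (P3.filter pred).card with hb
  set g := (P3.filter (fun T => ¬ pred T)).card with hg
  set N3 := n.choose 3 with hN3
  have hgN : (g : ℝ) = (N3 : ℝ) - b := by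
    have : b + g = N3 := hbg
    push_cast [← this]; ring
  have hSig : (1 + ε) * (n.choose 2 : ℝ) * ((k : ℝ) + 1) ≤
      ∑ e ∈ E, ((S e).card : ℝ) := by
    have : ((k + k : ℕ) : ℝ) / 2 + 1 = (k : ℝ) + 1 := by push_cast; ring
    rw [← this]
    exact hbig
  have hmul : (1 + ε) * (n.choose 2 : ℝ) * ((k : ℝ) + 1) * ((n - 2 : ℕ) : ℝ) ≤
      (∑ e ∈ E, ((S e).card : ℝ)) * ((n - 2 : ℕ) : ℝ) :=
    mul_le_mul_of_nonneg_right hSig (Nat.cast_nonneg _)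
  have hNr : (∑ e ∈ E, ((S e).card : ℝ)) * ((n - 2 : ℕ) : ℝ) ≤
      (b : ℝ) * (3 * ((k : ℝ) + k)) + (g : ℝ) * (3 * ((k : ℝ) + 1)) := by
    have := hN
    have hcast : ((∑ e ∈ E, (S e).card) * (n - 2) : ℕ) ≤
        (b * (3 * (k + k)) + g * (3 * (k + 1)) : ℕ) := this
    calc (∑ e ∈ E, ((S e).card : ℝ)) * ((n - 2 : ℕ) : ℝ)
        = (((∑ e ∈ E, (S e).card) * (n - 2) : ℕ) : ℝ) := by push_cast; ring
      _ ≤ ((b * (3 * (k + k)) + g * (3 * (k + 1)) : ℕ) : ℝ) := by exact_mod_cast hcast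
      _ = (b : ℝ) * (3 * ((k : ℝ) + k)) + (g : ℝ) * (3 * ((k : ℝ) + 1)) := by push_cast; ring
  have hch : (n.choose 2 : ℝ) * ((n - 2 : ℕ) : ℝ) = 3 * (N3 : ℝ) := by
    have : ((n.choose 3 * 3 : ℕ) : ℝ) = ((n.choose 2 * (n - 2) : ℕ) : ℝ) := by
      exact_mod_cast congrArg (Nat.cast (R := ℝ)) hchoose
    push_cast at this
    rw [hN3]; linarith
  have e1 : (1 + ε) * (3 * (N3 : ℝ)) * ((k : ℝ) + 1) ≤
      (b : ℝ) * (3 * ((k : ℝ) + k)) + ((N3 : ℝ) - b) * (3 * ((k : ℝ) + 1)) := by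
    rw [← hgN]
    calc (1 + ε) * (3 * (N3 : ℝ)) * ((k : ℝ) + 1)
        = (1 + ε) * (n.choose 2 : ℝ) * ((k : ℝ) + 1) * ((n - 2 : ℕ) : ℝ) := by
          rw [← hch]; ring
      _ ≤ _ := le_trans hmul hNr
  have e2 : ε * (N3 : ℝ) * ((k : ℝ) + 1) ≤ (b : ℝ) * ((k : ℝ) - 1) := by nlinarith [e1]
  have hbnn : (0 : ℝ) ≤ (b : ℝ) := Nat.cast_nonneg _
  have e3 : ε * (N3 : ℝ) * ((k : ℝ) + 1) ≤ (b : ℝ) * ((k : ℝ) + 1) := by nlinarith [e2, hbnn]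
  have hkpos : (0 : ℝ) < (k : ℝ) + 1 := by positivity
  have e4 : ε * (N3 : ℝ) ≤ (b : ℝ) := le_of_mul_le_mul_right (by linarith [e3]) hkpos
  -- relate b to the Nat.card
  have hfin : (b : ℝ) ≤ (Nat.card {T : Finset (Fin n) | pred T} : ℝ) := by
    have h1 : {T : Finset (Fin n) | pred T} = ↑(Finset.univ.filter pred) := by
      ext T; simp
    have h2 : Nat.card {T : Finset (Fin n) | pred T} = (Finset.univ.filter pred).card := by
      rw [h1, Nat.card_coe_set_eq, Set.ncard_coe_finset]
    rw [h2]
    exact_mod_cast Finset.card_le_card (Finset.filter_subset_filter pred (Finset.subset_univ P3))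
  have hN3nn : (0 : ℝ) ≤ (N3 : ℝ) := Nat.cast_nonneg _
  have hεN3 : (0 : ℝ) ≤ ε * (N3 : ℝ) := mul_nonneg hε.le hN3nn
  calc ε / 10 * (N3 : ℝ) ≤ ε * (N3 : ℝ) := by linarith
    _ ≤ (b : ℝ) := e4
    _ ≤ _ := hfin
end

section
/- Let H be an n-vertex C₄-free graph and let X ⊆ V(H) be a set in which every vertex has degree (in H) greater than (1−b)·√n, where 0 < b < 1/4. Then for every Z ⊆ X with |Z| = C·√n (where C = C(n) → ∞), the proper square H² satisfies e(H²[Z]) > C²·n/8, provided n is sufficiently large. -/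
theorem square_dense_on_large_sets (b : ℝ) (hb0 : 0 < b) (hb : b < 1 / 4)
    (C : ℕ → ℝ) (hC : Filter.Tendsto C Filter.atTop Filter.atTop) :
    ∃ n₀ : ℕ, ∀ n ≥ n₀, ∀ H : SimpleGraph (Fin n), C4Free H →
      ∀ X Z : Finset (Fin n), Z ⊆ X →
        (∀ v ∈ X, (deg H v : ℝ) > (1 - b) * Real.sqrt n) →
        (Z.card : ℝ) = C n * Real.sqrt n →
        (Nat.card ((properSquare H).induce (Z : Set (Fin n))).edgeSet : ℝ) >
          (C n) ^ 2 * n / 8 := by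
  classical
  obtain ⟨N, hN⟩ := (hC.eventually_ge_atTop 4).exists_forall_of_atTop
  refine ⟨max N 1, fun n hn H hH X Z hZX hX hZcard => ?_⟩
  have hnN : n ≥ N := le_trans (le_max_left _ _) hn
  have hn1 : 1 ≤ n := le_trans (le_max_right _ _) hn
  have hC4 : (4 : ℝ) ≤ C n := hN n hnN
  have hn1' : (1 : ℝ) ≤ n := by exact_mod_cast hn1
  have hsqrt : (1 : ℝ) ≤ Real.sqrt n := by
    rw [show (1:ℝ) = Real.sqrt 1 by simp]
    exact Real.sqrt_le_sqrt hn1'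
  have hsq : Real.sqrt n * Real.sqrt n = n := Real.mul_self_sqrt (by positivity)
  -- Z is nonempty
  have hZpos : (0 : ℝ) < Z.card := by
    rw [hZcard]; nlinarith
  have hZne : Z.Nonempty := Finset.card_pos.mp (by exact_mod_cast hZpos)
  -- degrees in Z
  set G' := (properSquare H).induce (Z : Set (Fin n)) with hG'
  set d : Fin n → ℕ := fun v => (Z.filter fun z => H.Adj v z).card with hd
  -- degree identity
  have hdeg : ∀ z : Fin n, deg H z = (Finset.univ.filter fun w => H.Adj z w).card := by
    intro z
    rw [deg, Nat.card_coe_set_eq, show {w | H.Adj z w} = ((Finset.univ.filter fun w => H.Adj z w) : Finset (Fin n)) by ext w; simp]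
    exact Set.ncard_coe_finset _
  -- sum of d = sum of degrees over Z
  have hsumd : ∑ v : Fin n, (d v : ℝ) = ∑ z ∈ Z, (deg H z : ℝ) := by
    have : ∑ v : Fin n, d v = ∑ z ∈ Z, deg H z := by
      simp_rw [hd, Finset.card_filter, hdeg]
      rw [Finset.sum_comm]
      congr 1; ext z
      rw [Finset.card_filter]
      congr 1; ext v
      simp [SimpleGraph.adj_comm]
    exact_mod_cast congrArg (Nat.cast : ℕ → ℝ) this
  -- lower bound on sum of degrees
  set D : ℝ := ∑ v : Fin n, (d v : ℝ) with hD
  have hDlb : D > C n * (1 - b) * n := by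
    rw [hsumd]
    calc ∑ z ∈ Z, (deg H z : ℝ) > ∑ _z ∈ Z, (1 - b) * Real.sqrt n :=
          Finset.sum_lt_sum_of_nonempty hZne (fun z hz => hX z (hZX hz))
      _ = Z.card * ((1 - b) * Real.sqrt n) := by rw [Finset.sum_const, nsmul_eq_mul]
      _ = C n * (1 - b) * n := by rw [hZcard]; linear_combination C n * (1 - b) * hsq
  -- the pair set P
  set P : Finset (Fin n × Fin n) := (Z ×ˢ Z).filter
      (fun p => p.1 ≠ p.2 ∧ ∃ v, H.Adj p.1 v ∧ H.Adj v p.2) with hP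
  -- cherries: disjoint union bound
  have hcherry : ∑ v : Fin n, (d v * d v - d v) ≤ P.card := by
    have hsub : (Finset.univ.biUnion fun v => (Z.filter fun z => H.Adj v z).offDiag) ⊆ P := by
      intro p hp
      simp only [Finset.mem_biUnion, Finset.mem_offDiag, Finset.mem_filter] at hp
      obtain ⟨v, -, ⟨h1Z, h1a⟩, ⟨h2Z, h2a⟩, hne⟩ := hp
      simp only [hP, Finset.mem_filter, Finset.mem_product]
      exact ⟨⟨h1Z, h2Z⟩, hne, v, h1a.symm, h2a⟩
    have hdisj : ((Finset.univ : Finset (Fin n)) : Set (Fin n)).PairwiseDisjoint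
        (fun v => (Z.filter fun z => H.Adj v z).offDiag) := by
      intro v _ w _ hvw
      refine Finset.disjoint_left.mpr fun p hp hq => hvw ?_
      obtain ⟨hp1, hp2, hpne⟩ := Finset.mem_offDiag.mp hp
      obtain ⟨hq1, hq2, -⟩ := Finset.mem_offDiag.mp hq
      exact hH p.1 p.2 v w hpne (Finset.mem_filter.mp hp1).2.symm (Finset.mem_filter.mp hp2).2.symm
        (Finset.mem_filter.mp hq1).2.symm (Finset.mem_filter.mp hq2).2.symm
    calc ∑ v : Fin n, (d v * d v - d v)
        = ∑ v : Fin n, ((Z.filter fun z => H.Adj v z).offDiag).card := by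
          simp_rw [Finset.offDiag_card]
          rfl
      _ = (Finset.univ.biUnion fun v => (Z.filter fun z => H.Adj v z).offDiag).card :=
          (Finset.card_biUnion (fun v hv w hw hvw => hdisj hv hw hvw)).symm
      _ ≤ P.card := Finset.card_le_card hsub
  -- P.card ≤ 2 * edge count
  set e : ℕ := G'.edgeFinset.card with he
  have hPe : P.card ≤ 2 * e := by
    rw [he, SimpleGraph.two_mul_card_edgeFinset]
    refine Finset.card_le_card_of_surjOn (fun q : ↥(Z : Set (Fin n)) × ↥(Z : Set (Fin n)) => ((q.1 : Fin n), (q.2 : Fin n))) ?_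
    intro p hp
    simp only [hP, Finset.coe_filter, Set.mem_setOf_eq, Finset.mem_product] at hp
    obtain ⟨⟨h1, h2⟩, hne, v, ha1, ha2⟩ := hp
    refine ⟨(⟨p.1, by simpa using h1⟩, ⟨p.2, by simpa using h2⟩), ?_, rfl⟩
    simp only [Finset.coe_filter, Set.mem_setOf_eq, Finset.mem_univ, true_and]
    exact ⟨by simpa using hne, v, ha1, ha2⟩
  -- cast to reals
  have haux : ∀ m : ℕ, m ≤ m * m := fun m => by nlinarith
  have hcherryR : ∑ v : Fin n, ((d v : ℝ) * d v - d v) ≤ 2 * (e : ℝ) := by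
    have h1 : ((∑ v : Fin n, (d v * d v - d v) : ℕ) : ℝ) ≤ 2 * (e : ℝ) := by
      exact_mod_cast le_trans hcherry hPe
    calc ∑ v : Fin n, ((d v : ℝ) * d v - d v)
        = ((∑ v : Fin n, (d v * d v - d v) : ℕ) : ℝ) := by
          rw [Nat.cast_sum]
          congr 1; ext v
          rw [Nat.cast_sub (haux (d v)), Nat.cast_mul]
      _ ≤ 2 * (e : ℝ) := h1
  -- Cauchy--Schwarz
  have hCS : D ^ 2 ≤ n * ∑ v : Fin n, (d v : ℝ) ^ 2 := by
    have := sq_sum_le_card_mul_sum_sq (s := (Finset.univ : Finset (Fin n)))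
      (f := fun v => (d v : ℝ))
    simpa [hD, Finset.card_univ] using this
  have hsumsq : ∑ v : Fin n, ((d v : ℝ) * d v - d v) = (∑ v : Fin n, (d v : ℝ)^2) - D := by
    rw [hD, ← Finset.sum_sub_distrib]
    congr 1; ext v; ring
  -- final: e as Nat.card
  have hecard : (Nat.card G'.edgeSet : ℝ) = e := by
    rw [he, SimpleGraph.edgeFinset_card, Nat.card_eq_fintype_card]
  rw [hecard]
  clear_value P e D d
  clear hsumd hd hD hP he hecard hdeg hG' G'
  -- arithmetic
  have hnpos : (0 : ℝ) < n := by linarith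
  have key : 2 * (e : ℝ) ≥ D ^ 2 / n - D := by
    have h2 : (∑ v : Fin n, (d v : ℝ)^2) ≥ D^2 / n := by
      rw [ge_iff_le, div_le_iff₀ hnpos]
      linarith [hCS]
    have hA : (∑ v : Fin n, (d v : ℝ)^2) - D ≤ 2 * (e : ℝ) := by
      rw [← hsumsq]; exact hcherryR
    linarith
  rw [gt_iff_lt, div_lt_iff₀ (by norm_num : (0:ℝ) < 8)]
  clear * - key hDlb hC4 hn1' hb hb0 hnpos
  have h1b : (3:ℝ)/4 ≤ 1 - b := by linarith
  have hCnpos : (0:ℝ) < C n := by linarith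
  have hbsq : (5:ℝ)/16 ≤ (1-b)^2 - 1/4 := by nlinarith
  have h5 : 4 * ((5:ℝ)/16) ≤ C n * ((1-b)^2 - 1/4) :=
    mul_le_mul hC4 hbsq (by norm_num) (by linarith)
  have hinner : C n * ((1-b)^2 - 1/4) - (1-b) ≥ 1/4 := by linarith
  have hfin : C n * (n:ℝ)^2 * (C n * ((1-b)^2 - 1/4) - (1-b)) ≥ C n * (n:ℝ)^2 * (1/4) :=
    mul_le_mul_of_nonneg_left hinner (by positivity)
  have h2 : (C n * (1-b) * n)^2 - (C n * (1-b) * n) * n - C n ^2 * (n:ℝ)^2/4 ≥ C n * (n:ℝ)^2/4 := by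
    linarith [hfin]
  have hfac : (0:ℝ) ≤ D + C n * (1-b) * n - n := by
    nlinarith [mul_nonneg (mul_nonneg (sub_nonneg.mpr hC4) (by linarith : (0:ℝ) ≤ 1-b)) hnpos.le,
      mul_le_mul_of_nonneg_right h1b hnpos.le]
  have hs : (0:ℝ) ≤ (D - C n * (1-b) * n) * (D + C n * (1-b) * n - n) :=
    mul_nonneg (sub_nonneg.mpr hDlb.le) hfac
  have h1 : D^2 - D*n ≥ (C n * (1-b) * n)^2 - (C n * (1-b) * n)*n := by linarith [hs]
  have hkey : D^2 - D*n ≤ 2*(e:ℝ)*n := by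
    have hm : (D^2/n - D) * n ≤ 2*(e:ℝ)*n := mul_le_mul_of_nonneg_right key hnpos.le
    have hid : (D^2/n - D) * n = D^2 - D*n := by field_simp
    linarith [hid ▸ hm]
  have hq : (0:ℝ) < C n * (n:ℝ)^2/4 := by positivity
  have h3 : C n ^ 2 * (n:ℝ)^2 < 8 * (e:ℝ) * n := by linarith
  have goal' : (C n ^ 2 * n) * n < ((e:ℝ) * 8) * n := by linarith [h3]
  exact lt_of_mul_lt_mul_right goal' hnpos.le
end

section
/- Let H be an n-vertex C₄-free graph and let Z ⊆ V(H) with |Z| = (1+3b)·√n for some 0 < b < 1/4, such that every vertex of Z has degree greater than (1−b)·√n in H. Then, for n sufficiently large, the proper square satisfies e(H²[Z]) ≥ b·n. -/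
theorem square_dense_on_medium_sets (b : ℝ) (hb0 : 0 < b) (hb : b < 1 / 4) :
    ∃ n₀ : ℕ, ∀ n ≥ n₀, ∀ H : SimpleGraph (Fin n), C4Free H →
      ∀ Z : Finset (Fin n),
        (Z.card : ℝ) = (1 + 3 * b) * Real.sqrt n →
        (∀ v ∈ Z, (deg H v : ℝ) > (1 - b) * Real.sqrt n) →
        (Nat.card ((properSquare H).induce (Z : Set (Fin n))).edgeSet : ℝ) ≥ b * n := by
  classical
  refine ⟨0, fun n _ H hC4 Z hZcard hdeg => ?_⟩
  have hdegeq : ∀ v : Fin n, deg H v = H.degree v := by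
    intro v
    show Nat.card (H.neighborSet v) = H.degree v
    rw [Nat.card_eq_fintype_card, SimpleGraph.card_neighborSet_eq_degree]
  set A : Fin n → Finset (Fin n) := fun v => Z.filter (fun z => H.Adj v z) with hA
  set d : Fin n → ℕ := fun v => (A v).card with hd
  -- (1) sum of d over all vertices = sum of degrees over Z
  have hsum : ∑ v : Fin n, d v = ∑ z ∈ Z, H.degree z := by
    simp only [hd, hA, Finset.card_filter]
    rw [Finset.sum_comm]
    refine Finset.sum_congr rfl fun z hz => ?_
    rw [← Finset.card_filter]
    rw [← SimpleGraph.card_neighborFinset_eq_degree]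
    congr 1
    ext w
    simp [SimpleGraph.adj_comm]
  -- definitions of the pair sets
  set O : Finset (Fin n × Fin n) :=
    (Z ×ˢ Z).filter (fun p => (properSquare H).Adj p.1 p.2) with hO
  set Bf : Fin n → Finset (Fin n × Fin n) := fun v => (A v).offDiag with hBf
  -- (2) Bf v are pairwise disjoint subsets of O
  have hsub : ∀ v : Fin n, Bf v ⊆ O := by
    intro v p hp
    rw [hBf] at hp
    obtain ⟨h1, h2, h3⟩ := Finset.mem_offDiag.mp hp
    rw [hA] at h1 h2
    simp only [Finset.mem_filter] at h1 h2
    refine Finset.mem_filter.mpr ⟨Finset.mem_product.mpr ⟨h1.1, h2.1⟩, h3, v, h1.2.symm, h2.2⟩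
  have hdisj : ∀ v ∈ Finset.univ (α := Fin n), ∀ w ∈ Finset.univ (α := Fin n),
      v ≠ w → Disjoint (Bf v) (Bf w) := by
    intro v _ w _ hvw
    rw [Finset.disjoint_left]
    intro p hpv hpw
    rw [hBf] at hpv hpw
    obtain ⟨h1, h2, h3⟩ := Finset.mem_offDiag.mp hpv
    obtain ⟨h1', h2', _⟩ := Finset.mem_offDiag.mp hpw
    rw [hA] at h1 h2 h1' h2'
    simp only [Finset.mem_filter] at h1 h2 h1' h2'
    exact hvw (hC4 p.1 p.2 v w h3 h1.2.symm h2.2.symm h1'.2.symm h2'.2.symm)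
  have h1 : ∑ v : Fin n, (Bf v).card ≤ O.card := by
    rw [← Finset.card_biUnion hdisj]
    exact Finset.card_le_card (Finset.biUnion_subset.mpr fun v _ => hsub v)
  -- (3) O maps 2-to-1 onto F
  set F : Finset (Sym2 (Fin n)) := O.image (fun p => s(p.1, p.2)) with hF
  have h2 : O.card ≤ 2 * F.card := by
    rw [Finset.card_eq_sum_card_image (fun p : Fin n × Fin n => s(p.1, p.2)) O]
    have hfib : ∀ t ∈ F, (O.filter fun p => s(p.1, p.2) = t).card ≤ 2 := by
      intro t ht
      obtain ⟨p₀, hp₀, hfp₀⟩ := Finset.mem_image.mp ht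
      have hss : (O.filter fun p => s(p.1, p.2) = t) ⊆ {p₀, (p₀.2, p₀.1)} := by
        intro p hp
        obtain ⟨_, hpt⟩ := Finset.mem_filter.mp hp
        rw [← hfp₀, Sym2.eq_iff] at hpt
        rcases hpt with ⟨ha, hb⟩ | ⟨ha, hb⟩
        · exact Finset.mem_insert.mpr (Or.inl (Prod.ext ha hb))
        · exact Finset.mem_insert.mpr (Or.inr (Finset.mem_singleton.mpr (Prod.ext ha hb)))
      calc (O.filter fun p => s(p.1, p.2) = t).card ≤ ({p₀, (p₀.2, p₀.1)} : Finset _).card :=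
            Finset.card_le_card hss
        _ ≤ 2 := Finset.card_insert_le _ _ |>.trans (by simp)
    calc ∑ t ∈ O.image (fun p : Fin n × Fin n => s(p.1, p.2)),
          (O.filter fun p => s(p.1, p.2) = t).card
        ≤ ∑ _t ∈ F, 2 := Finset.sum_le_sum hfib
      _ = 2 * F.card := by rw [Finset.sum_const, smul_eq_mul, mul_comm]
  -- (4) the edge set of the induced square has exactly F.card elements
  have h3 : Nat.card ((properSquare H).induce (Z : Set (Fin n))).edgeSet = F.card := by
    have hinj : Function.Injective
        (Sym2.map (Subtype.val : ↥(Z : Set (Fin n)) → Fin n)) :=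
      Sym2.map.injective Subtype.val_injective
    have himg : Sym2.map (Subtype.val : ↥(Z : Set (Fin n)) → Fin n) ''
        ((properSquare H).induce (Z : Set (Fin n))).edgeSet = ↑F := by
      ext t
      constructor
      · rintro ⟨e, he, rfl⟩
        induction e using Sym2.ind with
        | _ a b =>
          rw [SimpleGraph.mem_edgeSet] at he
          simp only [SimpleGraph.comap_adj, Function.Embedding.coe_subtype] at he
          have hadj : (properSquare H).Adj a.val b.val := he
          have haZ : a.val ∈ Z := Finset.mem_coe.mp a.2
          have hbZ : b.val ∈ Z := Finset.mem_coe.mp b.2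
          rw [Sym2.map_pair_eq]
          exact Finset.mem_coe.mpr (Finset.mem_image.mpr ⟨(a.val, b.val),
            Finset.mem_filter.mpr ⟨Finset.mem_product.mpr ⟨haZ, hbZ⟩, hadj⟩, rfl⟩)
      · intro ht
        obtain ⟨p, hp, hfp⟩ := Finset.mem_image.mp (Finset.mem_coe.mp ht)
        obtain ⟨hpZ, hadj⟩ := Finset.mem_filter.mp hp
        obtain ⟨hp1, hp2⟩ := Finset.mem_product.mp hpZ
        refine ⟨s(⟨p.1, Finset.mem_coe.mpr hp1⟩, ⟨p.2, Finset.mem_coe.mpr hp2⟩), ?_, ?_⟩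
        · rw [SimpleGraph.mem_edgeSet]
          simp only [SimpleGraph.comap_adj, Function.Embedding.coe_subtype]
          exact hadj
        · rw [Sym2.map_pair_eq]; exact hfp
    calc Nat.card ((properSquare H).induce (Z : Set (Fin n))).edgeSet
        = (((properSquare H).induce (Z : Set (Fin n))).edgeSet).ncard :=
          Nat.card_coe_set_eq _
      _ = (Sym2.map (Subtype.val : ↥(Z : Set (Fin n)) → Fin n) ''
            ((properSquare H).induce (Z : Set (Fin n))).edgeSet).ncard :=
          (Set.ncard_image_of_injective _ hinj).symm
      _ = (↑F : Set (Sym2 (Fin n))).ncard := by rw [himg]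
      _ = F.card := Set.ncard_coe_finset F
  -- (5) pointwise lower bound on |Bf v|
  have hBv : ∀ v : Fin n, (2 * (d v : ℝ) - 2) ≤ ((Bf v).card : ℝ) := by
    intro v
    have hoff : (Bf v).card = d v * d v - d v := by
      rw [hBf]; exact Finset.offDiag_card (A v)
    have hle : d v ≤ d v * d v := by
      rcases Nat.eq_zero_or_pos (d v) with h | h
      · simp [h]
      · exact Nat.le_mul_of_pos_left _ h
    rw [hoff, Nat.cast_sub hle]
    push_cast
    rcases Nat.lt_or_ge (d v) 2 with h | h
    · interval_cases h' : (d v) <;> norm_num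
    · have h2d : (2 : ℝ) ≤ (d v : ℝ) := by exact_mod_cast h
      nlinarith
  -- (6) real lower bound on the sum of d
  have hsqrt : Real.sqrt n * Real.sqrt n = (n : ℝ) := Real.mul_self_sqrt (Nat.cast_nonneg n)
  have hsumR : (1 + 3 * b) * (1 - b) * (n : ℝ) ≤ ((∑ v : Fin n, d v : ℕ) : ℝ) := by
    rw [hsum]
    push_cast
    have : ∀ z ∈ Z, (1 - b) * Real.sqrt n ≤ (H.degree z : ℝ) := by
      intro z hz
      have := hdeg z hz
      rw [hdegeq z] at this
      exact this.le
    calc (1 + 3 * b) * (1 - b) * (n : ℝ)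
        = ((Z.card : ℝ)) * ((1 - b) * Real.sqrt n) := by rw [hZcard]; ring_nf; nlinarith [hsqrt]
      _ = ∑ _z ∈ Z, (1 - b) * Real.sqrt n := by rw [Finset.sum_const, nsmul_eq_mul]
      _ ≤ ∑ z ∈ Z, (H.degree z : ℝ) := Finset.sum_le_sum this
  -- (7) put everything together
  have hkey : (∑ v : Fin n, (Bf v).card : ℕ) ≤ 2 * F.card := h1.trans h2
  have hkeyR : ((∑ v : Fin n, (Bf v).card : ℕ) : ℝ) ≤ 2 * (F.card : ℝ) := by
    exact_mod_cast hkey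
  have hsumB : 2 * ((∑ v : Fin n, d v : ℕ) : ℝ) - 2 * n ≤ ((∑ v : Fin n, (Bf v).card : ℕ) : ℝ) := by
    push_cast
    calc 2 * (∑ v : Fin n, (d v : ℝ)) - 2 * n
        = ∑ v : Fin n, (2 * (d v : ℝ) - 2) := by
          rw [Finset.sum_sub_distrib, ← Finset.mul_sum, Finset.sum_const, Finset.card_univ,
            Fintype.card_fin, nsmul_eq_mul, mul_comm (n : ℝ) 2]
      _ ≤ ∑ v : Fin n, ((Bf v).card : ℝ) := Finset.sum_le_sum fun v _ => hBv v
  rw [h3]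
  have hn0 : (0 : ℝ) ≤ (n : ℝ) := Nat.cast_nonneg n
  nlinarith [hsumR, hkeyR, hsumB, mul_nonneg (mul_nonneg hb0.le (by linarith : (0:ℝ) ≤ 1 - 3*b)) hn0]
end

section
/- For real x ∈ (0,1), define f(x) = H(x²)/x where H(y) = −y·log₂ y − (1−y)·log₂(1−y) is the binary entropy function. Then f attains a maximum on (0,1), and the maximizer c* satisfies 0.48 < c* < 0.5, with (2/3)·f(c*) < 1.082. -/
open Real Set

/-- The binary entropy function. -/
noncomputable def binEnt (y : ℝ) : ℝ :=
  -y * Real.logb 2 y - (1 - y) * Real.logb 2 (1 - y)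

noncomputable def phiKW (y : ℝ) : ℝ := (1 + y) * Real.log (1 - y) - y * Real.log y

lemma log_one_sub_bounds {x : ℝ} (Slo Shi E lo hi : ℝ) (n : ℕ) (h0 : 0 ≤ x) (h1 : x < 1)
    (hSlo : Slo ≤ (∑ i ∈ Finset.range n, x ^ (i + 1) / (i + 1)))
    (hShi : (∑ i ∈ Finset.range n, x ^ (i + 1) / (i + 1)) ≤ Shi)
    (hE : x ^ (n + 1) / (1 - x) ≤ E)
    (hlo : lo ≤ -Shi - E) (hhi : -Slo + E ≤ hi) :
    lo ≤ Real.log (1 - x) ∧ Real.log (1 - x) ≤ hi := by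
  have h := Real.abs_log_sub_add_sum_range_le (x := x) (by rwa [abs_of_nonneg h0]) n
  rw [abs_of_nonneg h0, abs_le] at h
  constructor <;> linarith [h.1, h.2]

lemma log_759 : (-0.2757536:ℝ) ≤ Real.log 0.759 ∧ Real.log 0.759 ≤ -0.2757534 := by
  have h := log_one_sub_bounds (x := 0.241) (0.2757535006) (0.2757535007) (13e-9)
    (-0.2757536) (-0.2757534) 12 (by norm_num) (by norm_num)
    (by norm_num [Finset.sum_range_succ]) (by norm_num [Finset.sum_range_succ])
    (by norm_num) (by norm_num) (by norm_num)
  exact (show ((1:ℝ) - 0.241) = 0.759 by norm_num) ▸ h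

lemma log_964 : (-0.0366641:ℝ) ≤ Real.log 0.964 ∧ Real.log 0.964 ≤ -0.0366639 := by
  have h := log_one_sub_bounds (x := 0.036) (0.0366639719) (0.0366639720) (63e-9)
    (-0.0366641) (-0.0366639) 4 (by norm_num) (by norm_num)
    (by norm_num [Finset.sum_range_succ]) (by norm_num [Finset.sum_range_succ])
    (by norm_num) (by norm_num) (by norm_num)
  exact (show ((1:ℝ) - 0.036) = 0.964 by norm_num) ▸ h

lemma log_7599 : (-0.274572:ℝ) ≤ Real.log 0.7599 ∧ Real.log 0.7599 ≤ -0.274564 := by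
  have h := log_one_sub_bounds (x := 0.2401) (0.2745680571) (0.2745680572) (35e-7)
    (-0.274572) (-0.274564) 8 (by norm_num) (by norm_num)
    (by norm_num [Finset.sum_range_succ]) (by norm_num [Finset.sum_range_succ])
    (by norm_num) (by norm_num) (by norm_num)
  exact (show ((1:ℝ) - 0.2401) = 0.7599 by norm_num) ▸ h

lemma log_98 : (-0.0202029:ℝ) ≤ Real.log 0.98 ∧ Real.log 0.98 ≤ -0.0202024 := by
  have h := log_one_sub_bounds (x := 0.02) (0.0202026666) (0.0202026667) (17e-8)
    (-0.0202029) (-0.0202024) 3 (by norm_num) (by norm_num)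
    (by norm_num [Finset.sum_range_succ]) (by norm_num [Finset.sum_range_succ])
    (by norm_num) (by norm_num) (by norm_num)
  exact (show ((1:ℝ) - 0.02) = 0.98 by norm_num) ▸ h

lemma log_757936 : (-0.2771566:ℝ) ≤ Real.log 0.757936 ∧ Real.log 0.757936 ≤ -0.2771560 := by
  have h := log_one_sub_bounds (x := 0.242064) (0.2771563100) (0.2771563101) (23e-8)
    (-0.2771566) (-0.2771560) 10 (by norm_num) (by norm_num)
    (by norm_num [Finset.sum_range_succ]) (by norm_num [Finset.sum_range_succ])
    (by norm_num) (by norm_num) (by norm_num)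
  exact (show ((1:ℝ) - 0.242064) = 0.757936 by norm_num) ▸ h

lemma log_984 : (-0.0161295:ℝ) ≤ Real.log 0.984 ∧ Real.log 0.984 ≤ -0.0161292 := by
  have h := log_one_sub_bounds (x := 0.016) (0.0161293653) (0.0161293654) (7e-8)
    (-0.0161295) (-0.0161292) 3 (by norm_num) (by norm_num)
    (by norm_num [Finset.sum_range_succ]) (by norm_num [Finset.sum_range_succ])
    (by norm_num) (by norm_num) (by norm_num)
  exact (show ((1:ℝ) - 0.016) = 0.984 by norm_num) ▸ h

lemma log_2401 : Real.log 0.2401 = 2 * (Real.log 0.98 - Real.log 2) := by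
  rw [show (0.2401:ℝ) = (0.98/2)^2 by norm_num, Real.log_pow,
    Real.log_div (by norm_num) (by norm_num)]
  push_cast; ring

lemma log_242064 : Real.log 0.242064 = 2 * (Real.log 0.984 - Real.log 2) := by
  rw [show (0.242064:ℝ) = (0.984/2)^2 by norm_num, Real.log_pow,
    Real.log_div (by norm_num) (by norm_num)]
  push_cast; ring

lemma log_241 : Real.log 0.241 = Real.log 0.964 - 2 * Real.log 2 := by
  rw [show (0.241:ℝ) = 0.964/2^2 by norm_num,
    Real.log_div (by norm_num) (by norm_num), Real.log_pow]
  push_cast; ring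

lemma phiKW_2401_pos : 0 < phiKW 0.2401 := by
  have h1 := log_7599
  have h2 := log_98
  have h3 := Real.log_two_gt_d9
  have : phiKW 0.2401 = 1.2401 * Real.log 0.7599 - 0.2401 * Real.log 0.2401 := by
    rw [phiKW]; norm_num
  rw [this, log_2401]
  nlinarith [h1.1, h2.2, h3]

lemma phiKW_242064_neg : phiKW 0.242064 < 0 := by
  have h1 := log_757936
  have h2 := log_984
  have h4 := Real.log_two_lt_d9
  have : phiKW 0.242064 = 1.242064 * Real.log 0.757936 - 0.242064 * Real.log 0.242064 := by
    rw [phiKW]; norm_num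
  rw [this, log_242064]
  nlinarith [h1.2, h2.1, h4]

lemma phiKW_concave : ConcaveOn ℝ (Ico (0:ℝ) 1) phiKW := by
  have h1 : ConcaveOn ℝ (Ico (0:ℝ) 1) (fun y => Real.negMulLog y) :=
    Real.concaveOn_negMulLog.subset Ico_subset_Ici_self (convex_Ico 0 1)
  have h2 : ConcaveOn ℝ (Ico (0:ℝ) 1) (fun y => Real.negMulLog (1 - y)) := by
    refine ⟨convex_Ico 0 1, fun x hx y hy a b ha hb hab => ?_⟩
    have hx' : (1:ℝ) - x ∈ Ici (0:ℝ) := by simp only [mem_Ici]; linarith [hx.2]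
    have hy' : (1:ℝ) - y ∈ Ici (0:ℝ) := by simp only [mem_Ici]; linarith [hy.2]
    have := Real.concaveOn_negMulLog.2 hx' hy' ha hb hab
    have heq : a • (1 - x) + b • (1 - y) = 1 - (a • x + b • y) := by
      simp only [smul_eq_mul]; nlinarith
    rwa [heq] at this
  have h3 : ConcaveOn ℝ (Ico (0:ℝ) 1) (fun y => 2 * Real.log (1 - y)) := by
    have hlog : ConcaveOn ℝ (Ico (0:ℝ) 1) (fun y => Real.log (1 - y)) := by
      refine ⟨convex_Ico 0 1, fun x hx y hy a b ha hb hab => ?_⟩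
      have hx' : (1:ℝ) - x ∈ Ioi (0:ℝ) := by simp only [mem_Ioi]; linarith [hx.2]
      have hy' : (1:ℝ) - y ∈ Ioi (0:ℝ) := by simp only [mem_Ioi]; linarith [hy.2]
      have := strictConcaveOn_log_Ioi.concaveOn.2 hx' hy' ha hb hab
      have heq : a • (1 - x) + b • (1 - y) = 1 - (a • x + b • y) := by
        simp only [smul_eq_mul]; nlinarith
      rwa [heq] at this
    simpa using hlog.smul (by norm_num : (0:ℝ) ≤ 2)
  have hsum := (h3.add h2).add h1
  have heq : phiKW = fun y => ((fun y => 2 * Real.log (1 - y)) y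
      + (fun y => Real.negMulLog (1 - y)) y) + (fun y => Real.negMulLog y) y := by
    funext y
    simp only [phiKW, Real.negMulLog]
    ring
  rwa [heq]

lemma phiKW_zero : phiKW 0 = 0 := by simp [phiKW]

lemma phiKW_pos {y : ℝ} (hy0 : 0 < y) (hy1 : y ≤ 0.2401) : 0 < phiKW y := by
  have h1 := phiKW_2401_pos
  rcases eq_or_lt_of_le hy1 with h | h
  · rwa [h]
  · set t : ℝ := y / 0.2401 with ht
    have ht0 : 0 < t := by positivity
    have ht1 : t < 1 := by rw [ht]; rw [div_lt_one (by norm_num)]; exact h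
    have key := phiKW_concave.2 (x := 0) (y := 0.2401)
      (by constructor <;> norm_num) (by constructor <;> norm_num)
      (by linarith : (0:ℝ) ≤ 1 - t) ht0.le (by ring)
    simp only [smul_eq_mul, mul_zero, zero_add] at key
    rw [phiKW_zero, mul_zero, zero_add] at key
    have : t * 0.2401 = y := by rw [ht]; field_simp
    rw [this] at key
    nlinarith

lemma phiKW_neg {y : ℝ} (hy0 : 0.242064 ≤ y) (hy1 : y < 1) : phiKW y < 0 := by
  have h1 := phiKW_2401_pos
  have h2 := phiKW_242064_neg
  rcases eq_or_lt_of_le hy0 with h | h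
  · rwa [← h]
  · set a : ℝ := (y - 0.242064) / (y - 0.2401) with ha
    set b : ℝ := (0.242064 - 0.2401) / (y - 0.2401) with hb
    have hd : (0:ℝ) < y - 0.2401 := by linarith
    have ha0 : 0 < a := by apply div_pos <;> linarith
    have hb0 : 0 < b := by apply div_pos <;> [norm_num; linarith]
    have hab : a + b = 1 := by rw [ha, hb]; field_simp; ring
    have hcomb : a • (0.2401:ℝ) + b • y = 0.242064 := by
      simp only [smul_eq_mul, ha, hb]; field_simp; ring
    have key := phiKW_concave.2 (x := 0.2401) (y := y)
      (by constructor <;> norm_num) (by constructor <;> [linarith; linarith])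
      ha0.le hb0.le hab
    rw [hcomb] at key
    simp only [smul_eq_mul] at key
    nlinarith

lemma binEnt_hasDeriv {y : ℝ} (h0 : 0 < y) (h1 : y < 1) :
    HasDerivAt binEnt ((Real.log (1 - y) - Real.log y) / Real.log 2) y := by
  have hy1 : (1:ℝ) - y ≠ 0 := by linarith
  have hA : HasDerivAt (fun y : ℝ => y * Real.log y) (Real.log y + 1) y :=
    Real.hasDerivAt_mul_log h0.ne'
  have hB : HasDerivAt (fun y : ℝ => (1 - y) * Real.log (1 - y))
      ((Real.log (1 - y) + 1) * (-1)) y := by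
    have hin : HasDerivAt (fun y : ℝ => 1 - y) (-1) y := by
      simpa using (hasDerivAt_id y).const_sub 1
    exact (Real.hasDerivAt_mul_log hy1).comp y hin
  have hG : HasDerivAt (fun y : ℝ => (-(y * Real.log y) - (1 - y) * Real.log (1 - y)) / Real.log 2)
      ((Real.log (1 - y) - Real.log y) / Real.log 2) y := by
    have := (hA.neg.sub hB).div_const (Real.log 2)
    refine this.congr_deriv ?_
    ring
  have heq : binEnt = fun y : ℝ => (-(y * Real.log y) - (1 - y) * Real.log (1 - y)) / Real.log 2 := by
    funext z
    simp only [binEnt, Real.logb]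
    ring
  rwa [heq]

lemma F_hasDeriv {x : ℝ} (h0 : 0 < x) (h1 : x < 1) :
    HasDerivAt (fun x : ℝ => binEnt (x ^ 2) / x)
      (phiKW (x ^ 2) / (x ^ 2 * Real.log 2)) x := by
  have hx2 : 0 < x ^ 2 := by positivity
  have hx21 : x ^ 2 < 1 := by nlinarith
  have hT : Real.log 2 ≠ 0 := (Real.log_pos (by norm_num)).ne'
  have hsq : HasDerivAt (fun x : ℝ => x ^ 2) (2 * x) x := by
    simpa using hasDerivAt_pow 2 x
  have hcomp : HasDerivAt (fun x : ℝ => binEnt (x ^ 2))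
      ((Real.log (1 - x ^ 2) - Real.log (x ^ 2)) / Real.log 2 * (2 * x)) x := by
    exact HasDerivAt.comp (h := fun x : ℝ => x ^ 2) (h₂ := binEnt) x
      (binEnt_hasDeriv hx2 hx21) hsq
  have hdiv := hcomp.div (hasDerivAt_id x) h0.ne'
  refine hdiv.congr_deriv ?_
  have hbe : binEnt (x ^ 2) =
      (-(x ^ 2 * Real.log (x ^ 2)) - (1 - x ^ 2) * Real.log (1 - x ^ 2)) / Real.log 2 := by
    simp only [binEnt, Real.logb]; ring
  rw [hbe, phiKW, id_eq]
  field_simp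
  ring

lemma binEnt_tangent {y : ℝ} (h0 : 0 < y) (h1 : y < 1) :
    binEnt y * Real.log 2 ≤ -y * Real.log 0.241 - (1 - y) * Real.log 0.759 := by
  have hy1 : (0:ℝ) < 1 - y := by linarith
  have hT : Real.log 2 ≠ 0 := (Real.log_pos (by norm_num)).ne'
  have e1 : binEnt y * Real.log 2 = -(y * Real.log y) - (1 - y) * Real.log (1 - y) := by
    simp only [binEnt, Real.logb]
    field_simp
  rw [e1]
  have ha : Real.log 0.241 - Real.log y ≤ 0.241 / y - 1 := by
    have h := Real.log_le_sub_one_of_pos (show (0:ℝ) < 0.241 / y by positivity)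
    rwa [Real.log_div (by norm_num) h0.ne'] at h
  have hb : Real.log 0.759 - Real.log (1 - y) ≤ 0.759 / (1 - y) - 1 := by
    have h := Real.log_le_sub_one_of_pos (show (0:ℝ) < 0.759 / (1 - y) by positivity)
    rwa [Real.log_div (by norm_num) hy1.ne'] at h
  have ha' : y * (Real.log 0.241 - Real.log y) ≤ 0.241 - y := by
    have := mul_le_mul_of_nonneg_left ha h0.le
    rwa [mul_sub (a := y) (b := 0.241 / y), mul_div_cancel₀ _ h0.ne', mul_one] at this
  have hb' : (1 - y) * (Real.log 0.759 - Real.log (1 - y)) ≤ 0.759 - (1 - y) := by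
    have := mul_le_mul_of_nonneg_left hb hy1.le
    rwa [mul_sub (a := 1 - y) (b := 0.759 / (1 - y)), mul_div_cancel₀ _ hy1.ne', mul_one] at this
  nlinarith

lemma F_lt_1623 {c : ℝ} (h1 : 0.49 ≤ c) (h2 : c ≤ 0.492) : binEnt (c ^ 2) / c < 1.623 := by
  have hc : (0:ℝ) < c := by linarith
  have hc2 : (0:ℝ) < c ^ 2 := by positivity
  have hc21 : c ^ 2 < 1 := by nlinarith
  have hT : (0:ℝ) < Real.log 2 := Real.log_pos (by norm_num)
  have htan := binEnt_tangent hc2 hc21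
  rw [log_241] at htan
  have hL9 := log_964
  have hL7 := log_759
  have hTlo := Real.log_two_gt_d9
  rw [div_lt_iff₀ hc]
  have hmul : binEnt (c ^ 2) * Real.log 2 < 1.623 * c * Real.log 2 → binEnt (c ^ 2) < 1.623 * c :=
    fun h => lt_of_mul_lt_mul_right h hT.le
  apply hmul
  have p1 : -(c ^ 2) * Real.log 0.964 ≤ c ^ 2 * 0.0366641 := by
    nlinarith [hL9.1, sq_nonneg c]
  have p2 : -(1 - c ^ 2) * Real.log 0.759 ≤ (1 - c ^ 2) * 0.2757536 := by
    nlinarith [hL7.1, hc21]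
  have p3 : (2 * c ^ 2 - 1.623 * c) * Real.log 2 ≤ (2 * c ^ 2 - 1.623 * c) * 0.6931471803 :=
    mul_le_mul_of_nonpos_left hTlo.le (by nlinarith)
  have q : c ^ 2 * 0.0366641 + (1 - c ^ 2) * 0.2757536
      + (2 * c ^ 2 - 1.623 * c) * 0.6931471803 < 0 := by
    nlinarith [mul_nonneg (sub_nonneg.2 h1) (sub_nonneg.2 h2)]
  nlinarith [p1, p2, p3, q]

theorem kleitman_winston_constant :
    ∃ c : ℝ, c ∈ Set.Ioo (0 : ℝ) 1 ∧
      (∀ x ∈ Set.Ioo (0 : ℝ) 1, binEnt (x ^ 2) / x ≤ binEnt (c ^ 2) / c) ∧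
      0.48 < c ∧ c < 0.5 ∧ 2 / 3 * (binEnt (c ^ 2) / c) < 1.082 := by
  have hT : (0:ℝ) < Real.log 2 := Real.log_pos (by norm_num)
  have hcont : ∀ s : Set ℝ, s ⊆ Ioo (0:ℝ) 1 →
      ContinuousOn (fun x : ℝ => binEnt (x ^ 2) / x) s := fun s hs x hx =>
    ((F_hasDeriv (hs hx).1 (hs hx).2).continuousAt).continuousWithinAt
  have hmono : StrictMonoOn (fun x : ℝ => binEnt (x ^ 2) / x) (Ioc (0:ℝ) 0.49) := by
    apply strictMonoOn_of_deriv_pos (convex_Ioc _ _)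
    · exact hcont _ (fun x hx => ⟨hx.1, lt_of_le_of_lt hx.2 (by norm_num)⟩)
    · intro x hx
      rw [interior_Ioc] at hx
      have h01 : x ∈ Ioo (0:ℝ) 1 := ⟨hx.1, by linarith [hx.2]⟩
      rw [(F_hasDeriv h01.1 h01.2).deriv]
      exact div_pos (phiKW_pos (pow_pos h01.1 2) (by nlinarith [hx.1, hx.2]))
        (mul_pos (pow_pos h01.1 2) hT)
  have hanti : StrictAntiOn (fun x : ℝ => binEnt (x ^ 2) / x) (Ico (0.492:ℝ) 1) := by
    apply strictAntiOn_of_deriv_neg (convex_Ico _ _)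
    · exact hcont _ (fun x hx => ⟨lt_of_lt_of_le (by norm_num) hx.1, hx.2⟩)
    · intro x hx
      rw [interior_Ico] at hx
      have h01 : x ∈ Ioo (0:ℝ) 1 := ⟨by linarith [hx.1], hx.2⟩
      rw [(F_hasDeriv h01.1 h01.2).deriv]
      exact div_neg_of_neg_of_pos
        (phiKW_neg (by nlinarith [hx.1]) (by nlinarith [hx.1, hx.2]))
        (mul_pos (pow_pos h01.1 2) hT)
  obtain ⟨c, hcmem, hcmax⟩ := (isCompact_Icc (a := (0.49:ℝ)) (b := 0.492)).exists_isMaxOn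
    ⟨0.49, by norm_num⟩
    (hcont _ (fun x hx => ⟨by linarith [hx.1], by linarith [hx.2]⟩))
  refine ⟨c, ⟨by linarith [hcmem.1], by linarith [hcmem.2]⟩, ?_,
    by linarith [hcmem.1], by linarith [hcmem.2], ?_⟩
  · intro x hx
    rcases le_or_gt x 0.49 with h | h
    · have s1 : binEnt (x ^ 2) / x ≤ binEnt ((0.49:ℝ) ^ 2) / 0.49 := by
        rcases eq_or_lt_of_le h with he | he
        · rw [he]
        · exact (hmono ⟨hx.1, h⟩ ⟨by norm_num, le_refl _⟩ he).le
      have s2 : binEnt ((0.49:ℝ) ^ 2) / 0.49 ≤ binEnt (c ^ 2) / c :=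
        hcmax ⟨le_refl _, by norm_num⟩
      linarith
    · rcases le_or_gt 0.492 x with h2 | h2
      · have s1 : binEnt (x ^ 2) / x ≤ binEnt ((0.492:ℝ) ^ 2) / 0.492 := by
          rcases eq_or_lt_of_le h2 with he | he
          · rw [← he]
          · exact (hanti ⟨le_refl _, by norm_num⟩ ⟨h2, hx.2⟩ he).le
        have s2 : binEnt ((0.492:ℝ) ^ 2) / 0.492 ≤ binEnt (c ^ 2) / c :=
          hcmax ⟨by norm_num, le_refl _⟩
        linarith
      · exact hcmax ⟨h.le, h2.le⟩
  · have := F_lt_1623 hcmem.1 hcmem.2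
    linarith
end
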